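/- arXiv:1703.02054 — 5 statements merged into one kernel-verified Lean document; each statement's English description precedes it below -/
import Mathlib

section
/- If G_a and G_b are independent Gamma(a,1) and Gamma(b,1) random variables, then G_a + G_b is independent of G_a/(G_a+G_b), and G_a+G_b has Gamma(a+b,1) distribution while G_a/(G_a+G_b) has Beta(a,b) distribution. -/
open MeasureTheory ProbabilityTheory Real Set
open scoped ENNReal

/-- The Gamma(a,1) distribution on ℝ, supported on (0,∞). -/
noncomputable def gammaM (a : ℝ) : Measure ℝ :=
  volume.withDensity (fun t => ENNReal.ofReal
    (if 0 < t then t ^ (a - 1) * Real.exp (-t) / Real.Gamma a else 0))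

/-- The Beta(a,b) distribution on ℝ, supported on (0,1). -/
noncomputable def betaM (a b : ℝ) : Measure ℝ :=
  volume.withDensity (fun x => ENNReal.ofReal
    (if 0 < x ∧ x < 1 then
      x ^ (a - 1) * (1 - x) ^ (b - 1) * Real.Gamma (a + b) / (Real.Gamma a * Real.Gamma b)
    else 0))

namespace BetaGammaAux

noncomputable def gpdf (a t : ℝ) : ℝ :=
  if 0 < t then t ^ (a - 1) * Real.exp (-t) / Real.Gamma a else 0

noncomputable def bpdf (a b x : ℝ) : ℝ :=
  if 0 < x ∧ x < 1 then
    x ^ (a - 1) * (1 - x) ^ (b - 1) * Real.Gamma (a + b) / (Real.Gamma a * Real.Gamma b)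
  else 0

lemma measurable_gpdf (a : ℝ) : Measurable (gpdf a) := by
  unfold gpdf
  exact Measurable.ite measurableSet_Ioi (by fun_prop) measurable_const

lemma measurable_bpdf (a b : ℝ) : Measurable (bpdf a b) := by
  unfold bpdf
  exact Measurable.ite measurableSet_Ioo (by fun_prop) measurable_const

noncomputable def T (z : ℝ × ℝ) : ℝ × ℝ := (z.1 + z.2, z.1 / (z.1 + z.2))

lemma measurable_T : Measurable T :=
  (measurable_fst.add measurable_snd).prodMk
    (measurable_fst.div (measurable_fst.add measurable_snd))

def Phi (q : ℝ × ℝ) : ℝ × ℝ := (q.1 * q.2, q.1 * (1 - q.2))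

lemma measurable_Phi : Measurable Phi :=
  (measurable_fst.mul measurable_snd).prodMk
    (measurable_fst.mul (measurable_const.sub measurable_snd))

noncomputable def PhiDer (q : ℝ × ℝ) : ℝ × ℝ →L[ℝ] ℝ × ℝ :=
  LinearMap.toContinuousLinearMap (Matrix.toLin (Module.Basis.finTwoProd ℝ) (Module.Basis.finTwoProd ℝ)
    !![q.2, q.1; 1 - q.2, -q.1])

lemma hasFDerivAt_Phi (q : ℝ × ℝ) : HasFDerivAt Phi (PhiDer q) q := by
  unfold Phi PhiDer
  rw [Matrix.toLin_finTwoProd_toContinuousLinearMap]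
  convert HasFDerivAt.prodMk (𝕜 := ℝ)
    ((hasFDerivAt_fst (𝕜 := ℝ) (p := q)).mul hasFDerivAt_snd)
    ((hasFDerivAt_fst (𝕜 := ℝ) (p := q)).mul ((hasFDerivAt_const (1:ℝ) q).sub hasFDerivAt_snd)) using 2 <;>
  · ext v <;> simp <;> ring

lemma det_PhiDer (q : ℝ × ℝ) : (PhiDer q).det = -q.1 := by
  unfold PhiDer
  simp only [LinearMap.det_toContinuousLinearMap, LinearMap.det_toLin, Matrix.det_fin_two_of]
  ring

def A : Set (ℝ × ℝ) := Ioi 0 ×ˢ Ioo 0 1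

lemma measurableSet_A : MeasurableSet A :=
  measurableSet_Ioi.prod measurableSet_Ioo

lemma injOn_Phi : InjOn Phi A := by
  rintro ⟨s, p⟩ ⟨hs, hp, hp1⟩ ⟨s', p'⟩ ⟨hs', hp', hp1'⟩ h
  simp only [Phi, Prod.mk.injEq] at h
  obtain ⟨h1, h2⟩ := h
  simp only [mem_Ioi] at hs hs'
  have hss : s = s' := by nlinarith
  subst hss
  have : p = p' := by
    have := mul_left_cancel₀ (ne_of_gt hs) h1
    exact this
  simp [this]

lemma image_Phi : Phi '' A = Ioi 0 ×ˢ Ioi 0 := by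
  ext z
  constructor
  · rintro ⟨q, ⟨hs, hp, hp1⟩, rfl⟩
    simp only [mem_Ioi, mem_prod, Phi] at hs ⊢
    exact ⟨mul_pos hs hp, mul_pos hs (by linarith)⟩
  · intro hz
    simp only [mem_prod, mem_Ioi] at hz
    obtain ⟨hx, hy⟩ := hz
    have hxy : 0 < z.1 + z.2 := by linarith
    refine ⟨(z.1 + z.2, z.1 / (z.1 + z.2)),
      ⟨hxy, div_pos hx hxy, (div_lt_one hxy).2 (by linarith)⟩, ?_⟩
    simp only [Phi]
    have h1 : (z.1 + z.2) * (z.1 / (z.1 + z.2)) = z.1 := by field_simp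
    have h2 : (z.1 + z.2) * (1 - z.1 / (z.1 + z.2)) = z.2 := by field_simp; ring
    rw [h1, h2]

lemma T_Phi {q : ℝ × ℝ} (hq : q ∈ A) : T (Phi q) = q := by
  obtain ⟨hs, hp, hp1⟩ := hq
  simp only [mem_Ioi] at hs
  have h1 : q.1 * q.2 + q.1 * (1 - q.2) = q.1 := by ring
  simp only [T, Phi, h1]
  rw [mul_div_cancel_left₀ _ (ne_of_gt hs)]

lemma gammaM_def (a : ℝ) : gammaM a = volume.withDensity (fun t => ENNReal.ofReal (gpdf a t)) := rfl

lemma betaM_def (a b : ℝ) : betaM a b = volume.withDensity (fun x => ENNReal.ofReal (bpdf a b x)) := rfl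

lemma gammaM_eq (a : ℝ) : gammaM a = gammaMeasure a 1 := by
  rw [gammaM_def]
  unfold gammaMeasure
  apply withDensity_congr_ae
  filter_upwards [compl_mem_ae_iff.mpr ((measure_singleton (0:ℝ)))] with t ht
  simp only [mem_compl_iff, mem_singleton_iff] at ht
  simp only [gpdf, gammaPDF, gammaPDFReal]
  rcases lt_trichotomy t 0 with h | h | h
  · rw [if_neg (by linarith), if_neg (by linarith)]
  · exact absurd h ht
  · rw [if_pos h, if_pos h.le, Real.one_rpow]
    ring_nf

lemma isProb_gammaM {a : ℝ} (ha : 0 < a) : IsProbabilityMeasure (gammaM a) := by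
  rw [gammaM_eq]
  exact isProbabilityMeasure_gammaMeasure ha one_pos

lemma withDensity_volume_prod (f g : ℝ → ℝ) (hf : Measurable f) (hg : Measurable g) :
    (volume.withDensity (fun x => ENNReal.ofReal (f x))).prod
      (volume.withDensity (fun y => ENNReal.ofReal (g y)))
      = (volume : Measure (ℝ × ℝ)).withDensity
          (fun z => ENNReal.ofReal (f z.1) * ENNReal.ofReal (g z.2)) := by
  refine Measure.prod_eq fun s t hs ht => ?_
  rw [withDensity_apply _ (hs.prod ht), Measure.volume_eq_prod ℝ ℝ, ← Measure.prod_restrict,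
    lintegral_prod_mul hf.ennreal_ofReal.aemeasurable hg.ennreal_ofReal.aemeasurable,
    withDensity_apply _ hs, withDensity_apply _ ht]

lemma map_withDensity_comp {α β : Type*} [MeasurableSpace α] [MeasurableSpace β]
    (ν : Measure α) {f : α → β} (hf : Measurable f) {g : β → ℝ≥0∞} (hg : Measurable g) :
    Measure.map f (ν.withDensity (g ∘ f)) = (Measure.map f ν).withDensity g := by
  ext E hE
  rw [Measure.map_apply hf hE, withDensity_apply _ hE, withDensity_apply _ (hf hE),
    setLIntegral_map hE hg hf]
  rfl

lemma density_eq {a b : ℝ} (ha : 0 < a) (hb : 0 < b) {q : ℝ × ℝ} (hq : q ∈ A) :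
    ENNReal.ofReal |(PhiDer q).det| *
      (ENNReal.ofReal (gpdf a (Phi q).1) * ENNReal.ofReal (gpdf b (Phi q).2)) =
    ENNReal.ofReal (gpdf (a + b) q.1) * ENNReal.ofReal (bpdf a b q.2) := by
  obtain ⟨hs, hp, hp1⟩ := hq
  simp only [mem_Ioi] at hs
  have hΓa := Real.Gamma_pos_of_pos ha
  have hΓb := Real.Gamma_pos_of_pos hb
  have hΓab := Real.Gamma_pos_of_pos (add_pos ha hb)
  have hsp : 0 < q.1 * q.2 := mul_pos hs hp
  have hs1p : 0 < q.1 * (1 - q.2) := mul_pos hs (by linarith)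
  rw [det_PhiDer, abs_neg, abs_of_pos hs]
  simp only [Phi, gpdf, bpdf, if_pos hsp, if_pos hs1p, if_pos hs,
    if_pos (show 0 < q.2 ∧ q.2 < 1 from ⟨hp, hp1⟩)]
  rw [← ENNReal.ofReal_mul (by positivity), ← ENNReal.ofReal_mul hs.le,
    ← ENNReal.ofReal_mul (by positivity)]
  congr 1
  have he : Real.exp (-(q.1 * q.2)) * Real.exp (-(q.1 * (1 - q.2))) = Real.exp (-q.1) := by
    rw [← Real.exp_add]; congr 1; ring
  have hss : q.1 ^ (a - 1) * q.1 ^ (b - 1) * q.1 = q.1 ^ (a + b - 1) := by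
    have h1 : q.1 ^ (a - 1) * q.1 ^ (b - 1) * q.1 ^ (1 : ℝ) = q.1 ^ (a - 1 + (b - 1) + 1) := by
      rw [← Real.rpow_add hs, ← Real.rpow_add hs]
    rw [show a + b - 1 = a - 1 + (b - 1) + 1 by ring, ← h1, Real.rpow_one]
  rw [mul_rpow hs.le hp.le, mul_rpow hs.le (by linarith : (0:ℝ) ≤ 1 - q.2)]
  rw [← hss, ← he]
  simp only [hsp, hs1p, if_true]
  field_simp [hΓa.ne', hΓb.ne', hΓab.ne']

lemma map_T_prod {a b : ℝ} (ha : 0 < a) (hb : 0 < b) :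
    Measure.map T ((gammaM a).prod (gammaM b)) = (gammaM (a + b)).prod (betaM a b) := by
  have hga := measurable_gpdf a
  have hgb := measurable_gpdf b
  set H : ℝ × ℝ → ℝ≥0∞ :=
    fun z => ENNReal.ofReal (gpdf a z.1) * ENNReal.ofReal (gpdf b z.2) with hH
  have hHm : Measurable H :=
    (hga.ennreal_ofReal.comp measurable_fst).mul (hgb.ennreal_ofReal.comp measurable_snd)
  have hprod : (gammaM a).prod (gammaM b) = (volume : Measure (ℝ × ℝ)).withDensity H := by
    rw [gammaM_def, gammaM_def]; exact withDensity_volume_prod _ _ hga hgb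
  have hrestr : (volume : Measure (ℝ × ℝ)).withDensity H
      = ((volume : Measure (ℝ × ℝ)).restrict (Ioi 0 ×ˢ Ioi 0)).withDensity H := by
    rw [← withDensity_indicator (measurableSet_Ioi.prod measurableSet_Ioi) H]
    congr 1
    funext z
    by_cases hz : z ∈ Ioi (0:ℝ) ×ˢ Ioi (0:ℝ)
    · rw [Set.indicator_of_mem hz]
    · rw [Set.indicator_of_notMem hz]
      simp only [mem_prod, mem_Ioi, not_and_or, not_lt] at hz
      rcases hz with h | h
      · simp [hH, gpdf, not_lt.2 h]
      · simp [hH, gpdf, not_lt.2 h]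
  have hder : ∀ x ∈ A, HasFDerivWithinAt Phi (PhiDer x) A x :=
    fun x _ => (hasFDerivAt_Phi x).hasFDerivWithinAt
  have hmap := map_withDensity_abs_det_fderiv_eq_addHaar (volume : Measure (ℝ × ℝ))
    measurableSet_A.nullMeasurableSet hder injOn_Phi
  have hdetm : Measurable fun q : ℝ × ℝ => ENNReal.ofReal |(PhiDer q).det| := by
    simp only [det_PhiDer]
    exact (measurable_fst.neg.abs).ennreal_ofReal
  set M : Measure (ℝ × ℝ) := ((volume : Measure (ℝ × ℝ)).restrict A).withDensity
      (fun q => ENNReal.ofReal |(PhiDer q).det| * H (Phi q)) with hM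
  have hMPhi : Measure.map Phi M = (gammaM a).prod (gammaM b) := by
    have hsplit : (fun q => ENNReal.ofReal |(PhiDer q).det| * H (Phi q))
        = (fun q => ENNReal.ofReal |(PhiDer q).det|) * (H ∘ Phi) := rfl
    rw [hM, hsplit, withDensity_mul _ hdetm (hHm.comp measurable_Phi),
      map_withDensity_comp _ measurable_Phi hHm, hmap, image_Phi, ← hrestr, ← hprod]
  have hae : T ∘ Phi =ᵐ[M] id := by
    have h1 : ∀ᵐ q ∂((volume : Measure (ℝ × ℝ)).restrict A), (T ∘ Phi) q = id q := by
      filter_upwards [ae_restrict_mem measurableSet_A] with q hq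
      exact T_Phi hq
    exact h1.filter_mono (withDensity_absolutelyContinuous _ _).ae_le
  calc Measure.map T ((gammaM a).prod (gammaM b))
      = Measure.map T (Measure.map Phi M) := by rw [hMPhi]
    _ = Measure.map (T ∘ Phi) M := Measure.map_map measurable_T measurable_Phi
    _ = Measure.map id M := Measure.map_congr hae
    _ = M := Measure.map_id
    _ = (gammaM (a + b)).prod (betaM a b) := by
        rw [gammaM_def, betaM_def,
          withDensity_volume_prod _ _ (measurable_gpdf (a + b)) (measurable_bpdf a b)]
        have hKind : (fun z : ℝ × ℝ =>
            ENNReal.ofReal (gpdf (a + b) z.1) * ENNReal.ofReal (bpdf a b z.2))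
            = Set.indicator A (fun z =>
              ENNReal.ofReal (gpdf (a + b) z.1) * ENNReal.ofReal (bpdf a b z.2)) := by
          funext z
          by_cases hz : z ∈ A
          · rw [Set.indicator_of_mem hz]
          · rw [Set.indicator_of_notMem hz]
            simp only [A, mem_prod, mem_Ioi, mem_Ioo, not_and_or, not_lt] at hz
            rcases hz with h | h
            · simp [gpdf, not_lt.2 h]
            · have hb0 : ¬(0 < z.2 ∧ z.2 < 1) := by
                rcases h with h | h <;> intro hc <;>
                  [linarith [hc.1]; linarith [hc.2]]
              simp [bpdf, hb0]
        rw [hKind, withDensity_indicator measurableSet_A]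
        apply withDensity_congr_ae
        filter_upwards [ae_restrict_mem measurableSet_A] with q hq
        exact density_eq ha hb hq

end BetaGammaAux

theorem beta_gamma_algebra
    {Ω : Type*} [MeasureSpace Ω] (μ : Measure Ω) [IsProbabilityMeasure μ]
    (a b : ℝ) (ha : 0 < a) (hb : 0 < b)
    (X Y : Ω → ℝ) (hX : Measurable X) (hY : Measurable Y)
    (hInd : IndepFun X Y μ)
    (hXlaw : μ.map X = gammaM a) (hYlaw : μ.map Y = gammaM b) :
    IndepFun (fun ω => X ω + Y ω) (fun ω => X ω / (X ω + Y ω)) μ ∧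
    μ.map (fun ω => X ω + Y ω) = gammaM (a + b) ∧
    μ.map (fun ω => X ω / (X ω + Y ω)) = betaM a b := by
  have hS : Measurable fun ω => X ω + Y ω := hX.add hY
  have hP : Measurable fun ω => X ω / (X ω + Y ω) := hX.div (hX.add hY)
  have hpairXY : Measurable fun ω => (X ω, Y ω) := hX.prodMk hY
  haveI hGa : IsProbabilityMeasure (gammaM a) := BetaGammaAux.isProb_gammaM ha
  haveI hGb : IsProbabilityMeasure (gammaM b) := BetaGammaAux.isProb_gammaM hb
  haveI hGab : IsProbabilityMeasure (gammaM (a + b)) := BetaGammaAux.isProb_gammaM (add_pos ha hb)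
  have hlawXY : μ.map (fun ω => (X ω, Y ω)) = (gammaM a).prod (gammaM b) := by
    rw [← hXlaw, ← hYlaw]
    exact (indepFun_iff_map_prod_eq_prod_map_map hX.aemeasurable hY.aemeasurable).1 hInd
  have hcomp : (fun ω => (X ω + Y ω, X ω / (X ω + Y ω)))
      = BetaGammaAux.T ∘ (fun ω => (X ω, Y ω)) := rfl
  have hSP : μ.map (fun ω => (X ω + Y ω, X ω / (X ω + Y ω)))
      = (gammaM (a + b)).prod (betaM a b) := by
    rw [hcomp, ← Measure.map_map BetaGammaAux.measurable_T hpairXY, hlawXY,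
      BetaGammaAux.map_T_prod ha hb]
  haveI hprobSP : IsProbabilityMeasure
      (μ.map (fun ω => (X ω + Y ω, X ω / (X ω + Y ω)))) :=
    Measure.isProbabilityMeasure_map (hS.prodMk hP).aemeasurable
  haveI hBsf : SigmaFinite (betaM a b) := by
    rw [BetaGammaAux.betaM_def]; infer_instance
  haveI hBprob : IsProbabilityMeasure (betaM a b) := by
    constructor
    have h2 : gammaM (a + b) univ * betaM a b univ = 1 := by
      rw [← Measure.prod_prod, univ_prod_univ, ← hSP]; exact measure_univ
    rwa [measure_univ, one_mul] at h2
  have hSlaw : μ.map (fun ω => X ω + Y ω) = gammaM (a + b) := by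
    have h : (fun ω => X ω + Y ω)
        = Prod.fst ∘ (fun ω => (X ω + Y ω, X ω / (X ω + Y ω))) := rfl
    rw [h, ← Measure.map_map measurable_fst (hS.prodMk hP), hSP, Measure.map_fst_prod,
      measure_univ, one_smul]
  have hPlaw : μ.map (fun ω => X ω / (X ω + Y ω)) = betaM a b := by
    have h : (fun ω => X ω / (X ω + Y ω))
        = Prod.snd ∘ (fun ω => (X ω + Y ω, X ω / (X ω + Y ω))) := rfl
    rw [h, ← Measure.map_map measurable_snd (hS.prodMk hP), hSP, Measure.map_snd_prod,
      measure_univ, one_smul]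
  refine ⟨?_, hSlaw, hPlaw⟩
  exact (indepFun_iff_map_prod_eq_prod_map_map hS.aemeasurable hP.aemeasurable).2
    (by rw [hSP, hSlaw, hPlaw])
end

section
/- Let T₀ be a positive random variable with density f₀, cumulant ψ(s) = -log E[e^{-s T₀}], and E[T₀^{-ν}] < ∞ for some ν > 0. Define a pair (ξ, T) with ξ having density s ↦ e^{-ψ(s)} s^{ν-1} / (E[T₀^{-ν}] Γ(ν)) on (0,∞), and conditional law of T given ξ = s having density t ↦ e^{-st + ψ(s)} f₀(t). Then T is independent of ξT, ξT is Gamma(ν,1) distributed, and T has density t ↦ t^{-ν} f₀(t)/E[T₀^{-ν}]. -/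
open MeasureTheory ProbabilityTheory Real Set
open scoped ENNReal

lemma lintegral_if_pos (c : ℝ → ℝ) {A : Set ℝ} (hA : MeasurableSet A) :
    ∫⁻ t in A, ENNReal.ofReal (if 0 < t then c t else 0) =
      ∫⁻ t in A ∩ Ioi 0, ENNReal.ofReal (c t) := by
  rw [← lintegral_indicator hA, ← lintegral_indicator (hA.inter measurableSet_Ioi),
    ← indicator_indicator]
  apply lintegral_congr
  intro t
  by_cases ht : 0 < t <;> by_cases htA : t ∈ A <;> simp [indicator, ht, htA]

lemma gammaM_apply (a : ℝ) (ha : 0 < a) {B : Set ℝ} (hB : MeasurableSet B) :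
    gammaM a B = ENNReal.ofReal (Real.Gamma a)⁻¹ *
      ∫⁻ u in B ∩ Ioi 0, ENNReal.ofReal (u ^ (a - 1) * Real.exp (-u)) := by
  rw [gammaM, withDensity_apply _ hB,
    lintegral_if_pos (fun t => t ^ (a - 1) * Real.exp (-t) / Real.Gamma a) hB,
    ← lintegral_const_mul _ (by fun_prop)]
  apply lintegral_congr
  intro u
  rw [← ENNReal.ofReal_mul (inv_nonneg.2 (Real.Gamma_pos_of_pos ha).le)]
  congr 1
  rw [inv_mul_eq_div]

lemma gammaM_univ (a : ℝ) (ha : 0 < a) : gammaM a univ = 1 := by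
  rw [gammaM_apply a ha MeasurableSet.univ, univ_inter]
  have hint : IntegrableOn (fun t : ℝ => t ^ (a - 1) * Real.exp (-t)) (Ioi 0) :=
    (Real.GammaIntegral_convergent ha).congr_fun (fun t _ => mul_comm _ _) measurableSet_Ioi
  have hval : ∫ t in Ioi (0:ℝ), t ^ (a - 1) * Real.exp (-t) = Real.Gamma a := by
    rw [Real.Gamma_eq_integral ha]
    exact setIntegral_congr_fun measurableSet_Ioi fun t ht => mul_comm _ _
  rw [← ofReal_integral_eq_lintegral_ofReal hint
      ((ae_restrict_iff' measurableSet_Ioi).2 (ae_of_all _ fun t ht => by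
        have h1 : (0:ℝ) < t := ht; positivity)), hval,
    ← ENNReal.ofReal_mul (inv_nonneg.2 (Real.Gamma_pos_of_pos ha).le),
    inv_mul_cancel₀ (Real.Gamma_pos_of_pos ha).ne', ENNReal.ofReal_one]

/-- Main theorem, assuming additionally that the density `f₀` is measurable. -/
theorem independence_by_random_scaling_forward_aux
    {Ω : Type*} [MeasureSpace Ω] (μ : Measure Ω) [IsProbabilityMeasure μ]
    (ν : ℝ) (hν : 0 < ν)
    (f₀ : ℝ → ℝ) (hf₀meas : Measurable f₀) (hf₀nn : ∀ t, 0 ≤ f₀ t)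
    (E : ℝ) (hE : ∫ t in Ioi (0:ℝ), t ^ (-ν) * f₀ t = E) (hEpos : 0 < E)
    (hEint : IntegrableOn (fun t => t ^ (-ν) * f₀ t) (Ioi 0))
    (ψ : ℝ → ℝ)
    (ξ T : Ω → ℝ) (hξ : Measurable ξ) (hT : Measurable T)
    (hjoint : μ.map (fun ω => (ξ ω, T ω)) =
      (volume : Measure (ℝ × ℝ)).withDensity (fun p => ENNReal.ofReal
        (if 0 < p.1 ∧ 0 < p.2 then
          (Real.exp (-(ψ p.1)) * p.1 ^ (ν - 1) / (E * Real.Gamma ν)) *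
            (Real.exp (-(p.1 * p.2) + ψ p.1) * f₀ p.2)
        else 0))) :
    IndepFun T (fun ω => ξ ω * T ω) μ ∧
    μ.map (fun ω => ξ ω * T ω) = gammaM ν ∧
    μ.map T = volume.withDensity (fun t => ENNReal.ofReal
      (if 0 < t then t ^ (-ν) * f₀ t / E else 0)) := by
  have hΓpos : 0 < Real.Gamma ν := Real.Gamma_pos_of_pos hν
  set gT : ℝ → ℝ≥0∞ := fun t => ENNReal.ofReal (if 0 < t then t ^ (-ν) * f₀ t / E else 0)
    with hgT
  set νT : Measure ℝ := volume.withDensity gT with hνT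
  have hgTmeas : Measurable gT := by
    apply Measurable.ennreal_ofReal
    exact Measurable.ite measurableSet_Ioi (by fun_prop) measurable_const
  have hνTapply : ∀ {A : Set ℝ}, MeasurableSet A →
      νT A = ∫⁻ t in A ∩ Ioi 0, ENNReal.ofReal (t ^ (-ν) * f₀ t / E) := by
    intro A hA
    rw [hνT, withDensity_apply _ hA, hgT,
      lintegral_if_pos (fun t => t ^ (-ν) * f₀ t / E) hA]
  have hνTuniv : νT univ = 1 := by
    rw [hνTapply MeasurableSet.univ, univ_inter]
    have hint : IntegrableOn (fun t : ℝ => t ^ (-ν) * f₀ t / E) (Ioi 0) := hEint.div_const E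
    rw [← ofReal_integral_eq_lintegral_ofReal hint
        ((ae_restrict_iff' measurableSet_Ioi).2 (ae_of_all _ fun t ht => by
          have h1 : (0:ℝ) < t := ht
          have h2 := hf₀nn t
          positivity))]
    rw [integral_div, hE, div_self hEpos.ne', ENNReal.ofReal_one]
  have hγuniv : gammaM ν univ = 1 := gammaM_univ ν hν
  have hνTprob : IsProbabilityMeasure νT := ⟨hνTuniv⟩
  have hγprob : IsProbabilityMeasure (gammaM ν) := ⟨hγuniv⟩
  -- simplified joint density
  set g : ℝ × ℝ → ℝ≥0∞ := fun p => ENNReal.ofReal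
      (if 0 < p.1 ∧ 0 < p.2 then p.1 ^ (ν - 1) * (Real.exp (-(p.1 * p.2)) * f₀ p.2) /
        (E * Real.Gamma ν) else 0) with hg
  have hgmeas : Measurable g := by
    apply Measurable.ennreal_ofReal
    exact Measurable.ite ((measurableSet_Ioi.preimage measurable_fst).inter
      (measurableSet_Ioi.preimage measurable_snd)) (by fun_prop) measurable_const
  have hjoint' : μ.map (fun ω => (ξ ω, T ω)) = volume.withDensity g := by
    rw [hjoint]
    congr 1
    funext p
    rw [hg]
    congr 1
    by_cases hp : 0 < p.1 ∧ 0 < p.2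
    · simp only [if_pos hp]
      have hexp : Real.exp (-(ψ p.1)) * Real.exp (-(p.1 * p.2) + ψ p.1) =
          Real.exp (-(p.1 * p.2)) := by
        rw [← Real.exp_add]; ring_nf
      calc Real.exp (-(ψ p.1)) * p.1 ^ (ν - 1) / (E * Real.Gamma ν) *
            (Real.exp (-(p.1 * p.2) + ψ p.1) * f₀ p.2)
          = Real.exp (-(ψ p.1)) * Real.exp (-(p.1 * p.2) + ψ p.1) *
            (p.1 ^ (ν - 1) * f₀ p.2) / (E * Real.Gamma ν) := by ring
        _ = p.1 ^ (ν - 1) * (Real.exp (-(p.1 * p.2)) * f₀ p.2) / (E * Real.Gamma ν) := by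
            rw [hexp]; ring
    · simp [hp]
  -- the map φ : (s,t) ↦ (t, s t)
  set φ : ℝ × ℝ → ℝ × ℝ := fun p => (p.2, p.1 * p.2) with hφdef
  have hφ : Measurable φ := measurable_snd.prodMk (measurable_fst.mul measurable_snd)
  have hmapTξT : μ.map (fun ω => (T ω, ξ ω * T ω)) =
      (μ.map (fun ω => (ξ ω, T ω))).map φ := by
    rw [Measure.map_map hφ (hξ.prodMk hT)]
    rfl
  -- key rectangle computation
  have key : ∀ (A B : Set ℝ), MeasurableSet A → MeasurableSet B →
      (μ.map (fun ω => (T ω, ξ ω * T ω))) (A ×ˢ B) = νT A * gammaM ν B := by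
    intro A B hA hB
    set FB : ℝ → ℝ≥0∞ := fun u => (B ∩ Ioi 0).indicator
        (fun u => ENNReal.ofReal (u ^ (ν - 1) * Real.exp (-u))) u with hFB
    have hFBmeas : Measurable FB :=
      Measurable.indicator (by fun_prop) (hB.inter measurableSet_Ioi)
    have hγB : gammaM ν B = ENNReal.ofReal (Real.Gamma ν)⁻¹ * ∫⁻ u, FB u := by
      rw [gammaM_apply ν hν hB]
      congr 1
      exact (lintegral_indicator (hB.inter measurableSet_Ioi) _).symm
    have hS : MeasurableSet (φ ⁻¹' (A ×ˢ B)) := hφ (hA.prod hB)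
    rw [hmapTξT, hjoint', Measure.map_apply hφ (hA.prod hB), withDensity_apply _ hS,
      ← lintegral_indicator hS, Measure.volume_eq_prod,
      lintegral_prod_symm _ ((hgmeas.indicator hS).aemeasurable)]
    -- inner integral computation
    have inner : ∀ t : ℝ, (∫⁻ s, (φ ⁻¹' (A ×ˢ B)).indicator g (s, t)) =
        (A ∩ Ioi 0).indicator gT t * gammaM ν B := by
      intro t
      by_cases htA : t ∈ A ∩ Ioi 0
      · obtain ⟨htA', ht'⟩ := htA
        have ht : (0:ℝ) < t := ht'
        -- pointwise identity in s
        have hpt : ∀ s : ℝ, (φ ⁻¹' (A ×ˢ B)).indicator g (s, t) =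
            ENNReal.ofReal (t ^ (1 - ν) * (f₀ t / (E * Real.Gamma ν))) * FB (s * t) := by
          intro s
          have hmem : ((s, t) ∈ φ ⁻¹' (A ×ˢ B)) ↔ (t ∈ A ∧ s * t ∈ B) := by
            simp [hφdef, Set.mem_prod]
          by_cases hsB : s * t ∈ B
          · by_cases hs : 0 < s
            · have hst : 0 < s * t := mul_pos hs ht
              simp only [hFB, hg]
              rw [indicator_of_mem (hmem.2 ⟨htA', hsB⟩),
                indicator_of_mem (Set.mem_inter hsB (Set.mem_Ioi.mpr hst))]
              simp only [if_pos (⟨hs, ht⟩ : 0 < s ∧ 0 < t)]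
              rw [← ENNReal.ofReal_mul (by
                have := hf₀nn t
                have h3 : (0:ℝ) < t ^ (1 - ν) := Real.rpow_pos_of_pos ht _
                positivity)]
              congr 1
              rw [Real.mul_rpow hs.le ht.le]
              have h1 : t ^ (1 - ν) * t ^ (ν - 1) = 1 := by
                rw [← Real.rpow_add ht]; norm_num
              linear_combination (-(Real.exp (-(s * t)) * f₀ t / (E * Real.Gamma ν) *
                s ^ (ν - 1))) * h1
            · have hst : s * t ∉ B ∩ Ioi 0 := by
                intro hmem2
                have hle : s * t ≤ 0 := mul_nonpos_iff.2 (Or.inr ⟨not_lt.1 hs, ht.le⟩)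
                exact absurd (hmem2.2 : 0 < s * t) (not_lt.2 hle)
              simp only [hFB]
              rw [indicator_of_notMem hst, mul_zero]
              by_cases hmem3 : (s, t) ∈ φ ⁻¹' (A ×ˢ B)
              · rw [indicator_of_mem hmem3]
                simp only [hg]
                rw [if_neg (by exact fun hc => hs hc.1), ENNReal.ofReal_zero]
              · rw [indicator_of_notMem hmem3]
          · have hst : s * t ∉ B ∩ Ioi 0 := fun hc => hsB hc.1
            simp only [hFB]
            rw [indicator_of_notMem hst, mul_zero,
              indicator_of_notMem (fun hc => hsB (hmem.1 hc).2)]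
        rw [lintegral_congr hpt,
          lintegral_const_mul _ (show Measurable fun s : ℝ => FB (s * t) from hFBmeas.comp (measurable_mul_const t)),
          ← lintegral_map hFBmeas (measurable_mul_const t),
          Real.map_volume_mul_right ht.ne', lintegral_smul_measure,
          indicator_of_mem (Set.mem_inter htA' ht'), hγB]
        rw [smul_eq_mul, ← mul_assoc, ← mul_assoc]
        congr 1
        rw [← ENNReal.ofReal_mul (by
          have := hf₀nn t
          have h3 : (0:ℝ) < t ^ (1 - ν) := Real.rpow_pos_of_pos ht _
          positivity)]
        simp only [hgT, if_pos ht]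
        rw [← ENNReal.ofReal_mul (by
          have := hf₀nn t
          have h3 : (0:ℝ) < t ^ (-ν) := Real.rpow_pos_of_pos ht _
          positivity)]
        congr 1
        rw [abs_of_pos (inv_pos.2 ht)]
        have h2 : t ^ (1 - ν) * t⁻¹ = t ^ (-ν) := by
          rw [← Real.rpow_neg_one t, ← Real.rpow_add ht]
          congr 1
          ring
        calc t ^ (1 - ν) * (f₀ t / (E * Real.Gamma ν)) * t⁻¹
            = (t ^ (1 - ν) * t⁻¹) * f₀ t / (E * Real.Gamma ν) := by ring
          _ = t ^ (-ν) * f₀ t / (E * Real.Gamma ν) := by rw [h2]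
          _ = t ^ (-ν) * f₀ t / E * (Real.Gamma ν)⁻¹ := by
              rw [← div_div, div_eq_mul_inv]
      · rw [indicator_of_notMem htA, zero_mul]
        have hz : ∀ s : ℝ, (φ ⁻¹' (A ×ˢ B)).indicator g (s, t) = 0 := by
          intro s
          by_cases hmem : (s, t) ∈ φ ⁻¹' (A ×ˢ B)
          · rw [indicator_of_mem hmem]
            have htA' : t ∈ A := by
              have h5 : (t, s * t) ∈ A ×ˢ B := hmem
              exact h5.1
            have hnt : ¬ 0 < t := fun h0 => htA ⟨htA', h0⟩
            simp only [hg]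
            rw [if_neg (by exact fun hc => hnt hc.2), ENNReal.ofReal_zero]
          · rw [indicator_of_notMem hmem]
        rw [lintegral_congr hz, lintegral_zero]
    rw [lintegral_congr inner,
      lintegral_mul_const _ (hgTmeas.indicator (hA.inter measurableSet_Ioi)),
      lintegral_indicator (hA.inter measurableSet_Ioi)]
    congr 1
    rw [hνTapply hA]
    apply setLIntegral_congr_fun (hA.inter measurableSet_Ioi)
    intro t ht
    simp only [hgT]
    rw [if_pos (show (0:ℝ) < t from ht.2)]
  haveI : SigmaFinite νT := inferInstance
  haveI : SigmaFinite (gammaM ν) := inferInstance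
  have hprod : μ.map (fun ω => (T ω, ξ ω * T ω)) = νT.prod (gammaM ν) :=
    (Measure.prod_eq key).symm
  have hTmarg : μ.map T = νT := by
    have h1 : μ.map T = (μ.map (fun ω => (T ω, ξ ω * T ω))).map Prod.fst := by
      rw [Measure.map_map measurable_fst (hT.prodMk (g := fun ω => ξ ω * T ω) (hξ.mul hT))]
      rfl
    rw [h1, hprod, Measure.map_fst_prod, hγuniv, one_smul]
  have hγmarg : μ.map (fun ω => ξ ω * T ω) = gammaM ν := by
    have h1 : μ.map (fun ω => ξ ω * T ω) =
        (μ.map (fun ω => (T ω, ξ ω * T ω))).map Prod.snd := by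
      rw [Measure.map_map measurable_snd (hT.prodMk (g := fun ω => ξ ω * T ω) (hξ.mul hT))]
      rfl
    rw [h1, hprod, Measure.map_snd_prod, hνTuniv, one_smul]
  refine ⟨?_, hγmarg, hTmarg⟩
  exact (indepFun_iff_map_prod_eq_prod_map_map hT.aemeasurable
    (hξ.mul hT).aemeasurable).mpr (by
      show Measure.map (fun ω => (T ω, ξ ω * T ω)) μ = (μ.map T).prod (μ.map (fun ω => ξ ω * T ω))
      rw [hprod, hTmarg, hγmarg])

theorem independence_by_random_scaling_forward
    {Ω : Type*} [MeasureSpace Ω] (μ : Measure Ω) [IsProbabilityMeasure μ]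
    (ν : ℝ) (hν : 0 < ν)
    (f₀ : ℝ → ℝ) (hf₀nn : ∀ t, 0 ≤ f₀ t)
    (hf₀dens : ∫ t in Ioi (0:ℝ), f₀ t = 1)
    -- E := E[T₀^{-ν}] < ∞, expressed via integrability and its value:
    (E : ℝ) (hE : ∫ t in Ioi (0:ℝ), t ^ (-ν) * f₀ t = E) (hEpos : 0 < E)
    (hEint : IntegrableOn (fun t => t ^ (-ν) * f₀ t) (Ioi 0))
    -- the cumulant function of T₀:
    (ψ : ℝ → ℝ) (hψ : ∀ s, ψ s = -Real.log (∫ t in Ioi (0:ℝ), Real.exp (-(s * t)) * f₀ t))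
    (ξ T : Ω → ℝ) (hξ : Measurable ξ) (hT : Measurable T)
    -- the joint law of (ξ,T): marginal density of ξ times the conditional (tilted) density of T,
    -- i.e. joint density (s,t) ↦ [e^{-ψ(s)} s^{ν-1}/(E Γ(ν))] ⬝ [e^{-st+ψ(s)} f₀(t)] on (0,∞)²:
    (hjoint : μ.map (fun ω => (ξ ω, T ω)) =
      (volume : Measure (ℝ × ℝ)).withDensity (fun p => ENNReal.ofReal
        (if 0 < p.1 ∧ 0 < p.2 then
          (Real.exp (-(ψ p.1)) * p.1 ^ (ν - 1) / (E * Real.Gamma ν)) *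
            (Real.exp (-(p.1 * p.2) + ψ p.1) * f₀ p.2)
        else 0))) :
    IndepFun T (fun ω => ξ ω * T ω) μ ∧
    μ.map (fun ω => ξ ω * T ω) = gammaM ν ∧
    μ.map T = volume.withDensity (fun t => ENNReal.ofReal
      (if 0 < t then t ^ (-ν) * f₀ t / E else 0)) := by
  -- f₀ is a.e. measurable on (0,∞); replace it by a measurable nonnegative version f₂
  have h1 : AEMeasurable f₀ (volume.restrict (Ioi 0)) := by
    have h2 : AEMeasurable (fun t => t ^ (-ν) * f₀ t) (volume.restrict (Ioi 0)) :=
      hEint.aemeasurable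
    have h3 : AEMeasurable (fun t : ℝ => t ^ ν * (t ^ (-ν) * f₀ t))
        (volume.restrict (Ioi 0)) := (by fun_prop : Measurable fun t : ℝ => t ^ ν).aemeasurable.mul h2
    refine h3.congr ?_
    filter_upwards [ae_restrict_mem measurableSet_Ioi] with t ht
    have h4 : t ^ ν * t ^ (-ν) = 1 := by
      rw [← Real.rpow_add ht]; simp
    calc t ^ ν * (t ^ (-ν) * f₀ t) = (t ^ ν * t ^ (-ν)) * f₀ t := by ring
      _ = f₀ t := by rw [h4, one_mul]
  obtain ⟨f₁, hf₁m, hf₁ae⟩ := h1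
  set f₂ : ℝ → ℝ := fun t => max (f₁ t) 0 with hf₂
  have hf₂m : Measurable f₂ := hf₁m.max measurable_const
  have hf₂nn : ∀ t, 0 ≤ f₂ t := fun t => le_max_right _ _
  have hae : f₀ =ᵐ[volume.restrict (Ioi 0)] f₂ := by
    filter_upwards [hf₁ae] with t h
    rw [hf₂]
    simp only [← h]
    rw [max_eq_left (hf₀nn t)]
  -- a measurable null superset of the set where f₀ and f₂ differ, within (0,∞)
  have hDnull : volume ({t : ℝ | f₀ t ≠ f₂ t} ∩ Ioi 0) = 0 := by
    rw [← Measure.restrict_apply' measurableSet_Ioi]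
    exact hae
  obtain ⟨D, hDsub, hDmeas, hD0⟩ := exists_measurable_superset_of_null hDnull
  have hagree : ∀ t : ℝ, 0 < t → t ∉ D → f₀ t = f₂ t := by
    intro t ht htD
    by_contra hne
    exact htD (hDsub ⟨hne, ht⟩)
  -- transfer hypotheses to f₂
  have hE₂ : ∫ t in Ioi (0:ℝ), t ^ (-ν) * f₂ t = E := by
    rw [← hE]
    apply integral_congr_ae
    filter_upwards [hae] with t h
    rw [h]
  have hEint₂ : IntegrableOn (fun t => t ^ (-ν) * f₂ t) (Ioi 0) := by
    apply hEint.congr_fun_ae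
    filter_upwards [hae] with t h
    rw [h]
  have hjoint₂ : μ.map (fun ω => (ξ ω, T ω)) =
      (volume : Measure (ℝ × ℝ)).withDensity (fun p => ENNReal.ofReal
        (if 0 < p.1 ∧ 0 < p.2 then
          (Real.exp (-(ψ p.1)) * p.1 ^ (ν - 1) / (E * Real.Gamma ν)) *
            (Real.exp (-(p.1 * p.2) + ψ p.1) * f₂ p.2)
        else 0)) := by
    rw [hjoint]
    apply withDensity_congr_ae
    have hnull2 : (volume : Measure (ℝ × ℝ)) (univ ×ˢ D) = 0 := by
      rw [Measure.volume_eq_prod, Measure.prod_prod, hD0, mul_zero]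
    filter_upwards [measure_eq_zero_iff_ae_notMem.mp hnull2] with p hp
    have hpD : p.2 ∉ D := fun hc => hp ⟨mem_univ _, hc⟩
    by_cases hc : 0 < p.1 ∧ 0 < p.2
    · rw [if_pos hc, if_pos hc, hagree p.2 hc.2 hpD]
    · rw [if_neg hc, if_neg hc]
  -- apply the auxiliary theorem
  obtain ⟨hindep, hγ, hTmarg⟩ := independence_by_random_scaling_forward_aux μ ν hν f₂ hf₂m
    hf₂nn E hE₂ hEpos hEint₂ ψ ξ T hξ hT hjoint₂
  refine ⟨hindep, hγ, ?_⟩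
  rw [hTmarg]
  apply withDensity_congr_ae
  filter_upwards [measure_eq_zero_iff_ae_notMem.mp hD0] with t htD
  by_cases ht : 0 < t
  · rw [if_pos ht, if_pos ht, hagree t ht htD]
  · rw [if_neg ht, if_neg ht]
end

section
/- Let T₀ be a positive random variable with density f₀, cumulant ψ, and E[T₀^{-ν}] < ∞. Suppose (ξ, T) are positive absolutely continuous random variables such that T is independent of ξT, ξT has Gamma(ν,1) distribution, and T has density t ↦ t^{-ν} f₀(t)/E[T₀^{-ν}]. Then ξ has density s ↦ e^{-ψ(s)} s^{ν-1}/(E[T₀^{-ν}] Γ(ν)), and the conditional density of T given ξ = s is t ↦ e^{-st+ψ(s)} f₀(t). -/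
open MeasureTheory ProbabilityTheory Real Set

open scoped ENNReal

noncomputable section

namespace RSConv

/-- the map (t,y) ↦ (y/t, t) -/
def F : ℝ × ℝ → ℝ × ℝ := fun p => (p.2 / p.1, p.1)

lemma measurable_F : Measurable F := (measurable_snd.div measurable_fst).prodMk measurable_fst

variable (ν E : ℝ) (h : ℝ → ℝ)

def dT : ℝ → ℝ≥0∞ := fun t => ENNReal.ofReal (if 0 < t then t ^ (-ν) * h t / E else 0)

def dY : ℝ → ℝ≥0∞ := fun y =>
  ENNReal.ofReal (if 0 < y then y ^ (ν - 1) * Real.exp (-y) / Real.Gamma ν else 0)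

def q : ℝ × ℝ → ℝ≥0∞ := fun p => ENNReal.ofReal
  (if 0 < p.1 ∧ 0 < p.2 then p.1 ^ (ν - 1) * Real.exp (-(p.1 * p.2)) * h p.2 / (E * Real.Gamma ν)
   else 0)

lemma meas_rpow_ite (a : ℝ) : Measurable (fun t : ℝ => if 0 < t then t ^ a else 0) := by
  have : (fun t : ℝ => if 0 < t then t ^ a else 0)
      = fun t => if 0 < t then Real.exp (Real.log t * a) else 0 := by
    funext t
    split
    · exact Real.rpow_def_of_pos ‹_› a
    · rfl
  rw [this]
  exact Measurable.ite measurableSet_Ioi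
    (Real.measurable_exp.comp (Real.measurable_log.mul measurable_const)) measurable_const

variable {ν E h}

lemma measurable_dT (hh : Measurable h) : Measurable (dT ν E h) := by
  have : dT ν E h = fun t =>
      ENNReal.ofReal ((if 0 < t then t ^ (-ν) else 0) * (h t / E)) := by
    funext t
    unfold dT
    by_cases h0 : 0 < t <;> simp [h0, mul_div_assoc]
  rw [this]
  exact ENNReal.measurable_ofReal.comp ((meas_rpow_ite _).mul (hh.div_const E))

lemma measurable_dY : Measurable (dY ν) := by
  have : dY ν = fun y =>
      ENNReal.ofReal ((if 0 < y then y ^ (ν - 1) else 0) * (Real.exp (-y) / Real.Gamma ν)) := by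
    funext y
    unfold dY
    by_cases h0 : 0 < y <;> simp [h0, mul_div_assoc]
  rw [this]
  exact ENNReal.measurable_ofReal.comp ((meas_rpow_ite _).mul
    ((Real.measurable_exp.comp measurable_neg).div_const _))

lemma measurable_q (hh : Measurable h) : Measurable (q ν E h) := by
  have : q ν E h = fun p : ℝ × ℝ =>
      ENNReal.ofReal ((if 0 < p.1 then p.1 ^ (ν - 1) else 0) * (if 0 < p.2 then (1:ℝ) else 0)
        * (Real.exp (-(p.1 * p.2)) * h p.2 / (E * Real.Gamma ν))) := by
    funext p
    unfold q
    by_cases h1 : 0 < p.1 <;> by_cases h2 : 0 < p.2 <;> simp [h1, h2] <;> ring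
  rw [this]
  refine ENNReal.measurable_ofReal.comp ?_
  refine Measurable.mul (Measurable.mul ?_ ?_) ?_
  · exact (meas_rpow_ite (ν - 1)).comp measurable_fst
  · exact Measurable.ite (measurable_snd measurableSet_Ioi) measurable_const measurable_const
  · exact ((Real.measurable_exp.comp (measurable_fst.mul measurable_snd).neg).mul
      (hh.comp measurable_snd)).div_const _


lemma density_eq (hν : 0 < ν) (hE : 0 < E) (hhnn : ∀ t, 0 ≤ h t) {t : ℝ} (ht : 0 < t) (s : ℝ) :
    dT ν E h t * ENNReal.ofReal t * dY ν (t * s) = q ν E h (s, t) := by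
  have hΓ : 0 < Real.Gamma ν := Real.Gamma_pos_of_pos hν
  by_cases hs : 0 < s
  · have hts : 0 < t * s := mul_pos ht hs
    unfold dT dY q
    simp only [if_pos ht, if_pos hts, if_pos (⟨hs, ht⟩ : 0 < s ∧ 0 < t)]
    rw [← ENNReal.ofReal_mul' (le_of_lt ht), ← ENNReal.ofReal_mul
      (mul_nonneg (div_nonneg (mul_nonneg (Real.rpow_nonneg ht.le _) (hhnn t)) hE.le) ht.le)]
    congr 1
    rw [Real.mul_rpow ht.le hs.le]
    have h1 : t ^ (-ν) * t ^ (ν - 1) * t ^ (1 : ℝ) = 1 := by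
      rw [← Real.rpow_add ht, ← Real.rpow_add ht, show -ν + (ν - 1) + 1 = 0 by ring,
        Real.rpow_zero]
    rw [Real.rpow_one] at h1
    calc t ^ (-ν) * h t / E * t * (t ^ (ν - 1) * s ^ (ν - 1) * Real.exp (-(t * s)) / Real.Gamma ν)
        = (t ^ (-ν) * t ^ (ν - 1) * t) *
            (s ^ (ν - 1) * Real.exp (-(t * s)) * h t / (E * Real.Gamma ν)) := by ring
      _ = s ^ (ν - 1) * Real.exp (-(s * t)) * h t / (E * Real.Gamma ν) := by
          rw [h1, one_mul, mul_comm t s]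
  · have hts : ¬ 0 < t * s := by
      push_neg at hs ⊢
      nlinarith
    unfold dT dY q
    simp [hts, hs]

lemma slice (hν : 0 < ν) (hE : 0 < E) (hh : Measurable h) (hhnn : ∀ t, 0 ≤ h t)
    {f : ℝ × ℝ → ℝ≥0∞} (hf : Measurable f) (t : ℝ) :
    dT ν E h t * ∫⁻ y, dY ν y * f (y / t, t) ∂volume
      = ∫⁻ s, q ν E h (s, t) * f (s, t) ∂volume := by
  by_cases ht : 0 < t
  · have hH : Measurable fun y => dY ν y * f (y / t, t) :=
      measurable_dY.mul (hf.comp ((measurable_id.div_const t).prodMk measurable_const))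
    have hvol : (volume : Measure ℝ) = ENNReal.ofReal |t| • Measure.map (t * ·) volume :=
      (Real.smul_map_volume_mul_left (ne_of_gt ht)).symm
    calc dT ν E h t * ∫⁻ y, dY ν y * f (y / t, t) ∂volume
        = dT ν E h t * (ENNReal.ofReal |t| *
            ∫⁻ s, dY ν (t * s) * f (t * s / t, t) ∂volume) := by
          conv_lhs => rw [hvol, lintegral_smul_measure,
            lintegral_map hH (measurable_const_mul t), smul_eq_mul]
      _ = ∫⁻ s, dT ν E h t * ENNReal.ofReal |t| * (dY ν (t * s) * f (t * s / t, t)) ∂volume := by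
          have hH2 : Measurable fun s : ℝ => dY ν (t * s) * f (t * s / t, t) :=
            hH.comp (measurable_const_mul t)
          rw [← mul_assoc, ← lintegral_const_mul _ hH2]
      _ = ∫⁻ s, q ν E h (s, t) * f (s, t) ∂volume := by
          refine lintegral_congr fun s => ?_
          rw [mul_div_cancel_left₀ s (ne_of_gt ht), abs_of_pos ht, ← mul_assoc,
            density_eq hν hE hhnn ht s]
  · have h0 : dT ν E h t = 0 := by unfold dT; simp [ht]
    have h1 : ∀ s, q ν E h (s, t) = 0 := by intro s; unfold q; simp [ht]
    simp [h0, h1]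

lemma lintegral_key (hν : 0 < ν) (hE : 0 < E) (hh : Measurable h) (hhnn : ∀ t, 0 ≤ h t)
    [SigmaFinite (volume.withDensity (dT ν E h))] [SigmaFinite (volume.withDensity (dY ν))]
    {f : ℝ × ℝ → ℝ≥0∞} (hf : Measurable f) :
    ∫⁻ p, f p ∂(((volume.withDensity (dT ν E h)).prod (volume.withDensity (dY ν))).map F)
      = ∫⁻ p, q ν E h p * f p ∂(volume : Measure (ℝ × ℝ)) := by
  have hfF : Measurable fun p : ℝ × ℝ => f (F p) := hf.comp measurable_F
  rw [lintegral_map hf measurable_F, lintegral_prod _ hfF.aemeasurable]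
  have hG : Measurable fun t => ∫⁻ y, f (F (t, y)) ∂(volume.withDensity (dY ν)) :=
    hfF.lintegral_prod_right'
  rw [lintegral_withDensity_eq_lintegral_mul volume (measurable_dT hh) hG]
  have step : ∀ t : ℝ, (dT ν E h * fun t => ∫⁻ y, f (F (t, y)) ∂(volume.withDensity (dY ν))) t
      = ∫⁻ s, q ν E h (s, t) * f (s, t) ∂volume := by
    intro t
    have hft : Measurable fun y : ℝ => f (y / t, t) :=
      hf.comp ((measurable_id.div_const t).prodMk measurable_const)
    have hFty : ∀ y : ℝ, F (t, y) = (y / t, t) := fun y => rfl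
    simp only [Pi.mul_apply, hFty]
    rw [lintegral_withDensity_eq_lintegral_mul volume measurable_dY hft]
    exact slice hν hE hh hhnn hf t
  rw [lintegral_congr step]
  have hsw : AEMeasurable (Function.uncurry fun t s : ℝ => q ν E h (s, t) * f (s, t))
      ((volume : Measure ℝ).prod volume) :=
    (((measurable_q hh).mul hf).comp measurable_swap).aemeasurable
  rw [lintegral_lintegral_swap hsw]
  rw [Measure.volume_eq_prod ℝ ℝ, lintegral_prod (fun p : ℝ × ℝ => q ν E h p * f p) ((measurable_q hh).mul hf).aemeasurable]

lemma map_eq (hν : 0 < ν) (hE : 0 < E) (hh : Measurable h) (hhnn : ∀ t, 0 ≤ h t)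
    [SigmaFinite (volume.withDensity (dT ν E h))] [SigmaFinite (volume.withDensity (dY ν))] :
    ((volume.withDensity (dT ν E h)).prod (volume.withDensity (dY ν))).map F
      = (volume : Measure (ℝ × ℝ)).withDensity (q ν E h) := by
  refine Measure.ext fun A hA => ?_
  have hind : Measurable (A.indicator (1 : ℝ × ℝ → ℝ≥0∞)) := measurable_one.indicator hA
  calc (((volume.withDensity (dT ν E h)).prod (volume.withDensity (dY ν))).map F) A
      = ∫⁻ p, A.indicator 1 p
          ∂(((volume.withDensity (dT ν E h)).prod (volume.withDensity (dY ν))).map F) :=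
        (lintegral_indicator_one hA).symm
    _ = ∫⁻ p, q ν E h p * A.indicator 1 p ∂(volume : Measure (ℝ × ℝ)) :=
        lintegral_key hν hE hh hhnn hind
    _ = ∫⁻ p, A.indicator 1 p ∂((volume : Measure (ℝ × ℝ)).withDensity (q ν E h)) := by
        rw [lintegral_withDensity_eq_lintegral_mul _ (measurable_q hh) hind]; rfl
    _ = ((volume : Measure (ℝ × ℝ)).withDensity (q ν E h)) A := lintegral_indicator_one hA


lemma marginal (hν : 0 < ν) (hE : 0 < E) (hh : Measurable h) (hhnn : ∀ t, 0 ≤ h t)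
    (hint : IntegrableOn h (Ioi 0)) (ψ : ℝ → ℝ)
    (hψL : ∀ s, 0 < s → Real.exp (-ψ s) = ∫ t in Ioi (0:ℝ), Real.exp (-(s * t)) * h t) (s : ℝ) :
    ∫⁻ t, q ν E h (s, t) ∂volume
      = ENNReal.ofReal (if 0 < s then Real.exp (-ψ s) * s ^ (ν - 1) / (E * Real.Gamma ν) else 0) := by
  have hΓ : 0 < Real.Gamma ν := Real.Gamma_pos_of_pos hν
  by_cases hs : 0 < s
  · rw [if_pos hs]
    have hq : ∀ t : ℝ, q ν E h (s, t)
        = (Ioi (0:ℝ)).indicator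
            (fun t => ENNReal.ofReal (s ^ (ν - 1) * Real.exp (-(s * t)) * h t / (E * Real.Gamma ν))) t := by
      intro t
      unfold q
      by_cases ht : 0 < t <;> simp [indicator, hs, ht, mem_Ioi]
    simp only [hq]
    rw [lintegral_indicator measurableSet_Ioi]
    -- integrability of the tilted density
    have hexp : IntegrableOn (fun t => Real.exp (-(s * t)) * h t) (Ioi 0) := by
      refine Integrable.mono hint
        ((Real.measurable_exp.comp ((measurable_const_mul s).neg)).mul hh).aestronglyMeasurable ?_
      refine (ae_restrict_iff' measurableSet_Ioi).2 (Filter.Eventually.of_forall fun t ht => ?_)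
      have h1 : Real.exp (-(s * t)) ≤ 1 :=
        Real.exp_le_one_iff.2 (by nlinarith [mem_Ioi.1 ht])
      have h2 : (0:ℝ) < Real.exp (-(s * t)) := Real.exp_pos _
      rw [Real.norm_eq_abs, Real.norm_eq_abs, abs_mul, abs_of_pos h2]
      exact mul_le_of_le_one_left (abs_nonneg _) h1
    have hGint : IntegrableOn
        (fun t => s ^ (ν - 1) * Real.exp (-(s * t)) * h t / (E * Real.Gamma ν)) (Ioi 0) := by
      have : (fun t => s ^ (ν - 1) * Real.exp (-(s * t)) * h t / (E * Real.Gamma ν))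
          = fun t => (s ^ (ν - 1) / (E * Real.Gamma ν)) * (Real.exp (-(s * t)) * h t) := by
        funext t; ring
      rw [this]
      exact hexp.const_mul _
    have hnn : 0 ≤ᵐ[volume.restrict (Ioi 0)]
        fun t => s ^ (ν - 1) * Real.exp (-(s * t)) * h t / (E * Real.Gamma ν) := by
      refine Filter.Eventually.of_forall fun t => ?_
      have := Real.rpow_nonneg hs.le (ν - 1)
      have := (Real.exp_pos (-(s * t))).le
      have := hhnn t
      positivity
    rw [← ofReal_integral_eq_lintegral_ofReal hGint hnn]
    congr 1
    have : ∀ t : ℝ, s ^ (ν - 1) * Real.exp (-(s * t)) * h t / (E * Real.Gamma ν)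
        = (s ^ (ν - 1) / (E * Real.Gamma ν)) * (Real.exp (-(s * t)) * h t) := fun t => by ring
    rw [integral_congr_ae (Filter.Eventually.of_forall fun t => this t), MeasureTheory.integral_const_mul,
      ← hψL s hs]
    ring
  · have hq : ∀ t : ℝ, q ν E h (s, t) = 0 := by
      intro t; unfold q; simp [hs]
    simp [hq, if_neg hs]

lemma map_fst (hν : 0 < ν) (hE : 0 < E) (hh : Measurable h) (hhnn : ∀ t, 0 ≤ h t)
    (hint : IntegrableOn h (Ioi 0)) (ψ : ℝ → ℝ)
    (hψL : ∀ s, 0 < s → Real.exp (-ψ s) = ∫ t in Ioi (0:ℝ), Real.exp (-(s * t)) * h t) :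
    ((volume : Measure (ℝ × ℝ)).withDensity (q ν E h)).map Prod.fst
      = volume.withDensity (fun s => ENNReal.ofReal
          (if 0 < s then Real.exp (-(ψ s)) * s ^ (ν - 1) / (E * Real.Gamma ν) else 0)) := by
  refine Measure.ext fun A hA => ?_
  rw [Measure.map_apply measurable_fst hA, withDensity_apply _ (measurable_fst hA),
    withDensity_apply _ hA]
  have hpre : Prod.fst ⁻¹' A = A ×ˢ (univ : Set ℝ) := (prod_univ).symm
  rw [Measure.volume_eq_prod ℝ ℝ, hpre, ← Measure.prod_restrict, Measure.restrict_univ,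
    lintegral_prod _ (measurable_q hh).aemeasurable]
  refine lintegral_congr fun s => ?_
  exact marginal hν hE hh hhnn hint ψ hψL s

end RSConv

end

open RSConv

theorem independence_by_random_scaling_converse
    {Ω : Type*} [MeasureSpace Ω] (μ : Measure Ω) [IsProbabilityMeasure μ]
    (ν : ℝ) (hν : 0 < ν)
    (f₀ : ℝ → ℝ) (hf₀nn : ∀ t, 0 ≤ f₀ t)
    (hf₀dens : ∫ t in Ioi (0:ℝ), f₀ t = 1)
    (E : ℝ) (hE : ∫ t in Ioi (0:ℝ), t ^ (-ν) * f₀ t = E) (hEpos : 0 < E)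
    (hEint : IntegrableOn (fun t => t ^ (-ν) * f₀ t) (Ioi 0))
    (ψ : ℝ → ℝ) (hψ : ∀ s, ψ s = -Real.log (∫ t in Ioi (0:ℝ), Real.exp (-(s * t)) * f₀ t))
    (ξ T : Ω → ℝ) (hξ : Measurable ξ) (hT : Measurable T)
    (hξpos : ∀ᵐ ω ∂μ, 0 < ξ ω) (hTpos : ∀ᵐ ω ∂μ, 0 < T ω)
    -- absolute continuity: the joint law of (ξ,T) has a Lebesgue density g on (0,∞)²:
    (g : ℝ × ℝ → ℝ) (hg : Measurable g) (hgnn : ∀ p, 0 ≤ g p)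
    (habs : μ.map (fun ω => (ξ ω, T ω)) =
      (volume : Measure (ℝ × ℝ)).withDensity (fun p => ENNReal.ofReal (g p)))
    -- the independence and distributional assumptions:
    (hInd : IndepFun T (fun ω => ξ ω * T ω) μ)
    (hGamma : μ.map (fun ω => ξ ω * T ω) = gammaM ν)
    (hTlaw : μ.map T = volume.withDensity (fun t => ENNReal.ofReal
      (if 0 < t then t ^ (-ν) * f₀ t / E else 0))) :
    -- conclusion: ξ has the stated density, and the joint law factorizes as
    -- marginal of ξ times the exponential tilt of f₀ (the conditional density of T given ξ = s):
    μ.map ξ = volume.withDensity (fun s => ENNReal.ofReal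
      (if 0 < s then Real.exp (-(ψ s)) * s ^ (ν - 1) / (E * Real.Gamma ν) else 0)) ∧
    μ.map (fun ω => (ξ ω, T ω)) =
      (volume : Measure (ℝ × ℝ)).withDensity (fun p => ENNReal.ofReal
        (if 0 < p.1 ∧ 0 < p.2 then
          (Real.exp (-(ψ p.1)) * p.1 ^ (ν - 1) / (E * Real.Gamma ν)) *
            (Real.exp (-(p.1 * p.2) + ψ p.1) * f₀ p.2)
        else 0)) := by
  -- f₀ is integrable on (0,∞)
  have hf₀int : IntegrableOn f₀ (Ioi 0) := by
    by_contra hc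
    rw [integral_undef hc] at hf₀dens
    norm_num at hf₀dens
  -- measurable nonneg representative h of f₀
  obtain ⟨h0, hh0m, hh0e⟩ := hf₀int.aestronglyMeasurable.aemeasurable
  set h : ℝ → ℝ := fun t => max (h0 t) 0 with hh_def
  have hh : Measurable h := hh0m.max measurable_const
  have hhnn : ∀ t, 0 ≤ h t := fun t => le_max_right _ _
  have hhe : f₀ =ᵐ[volume.restrict (Ioi 0)] h := by
    filter_upwards [hh0e] with t ht
    rw [hh_def]
    simp only []
    rw [← ht, max_eq_left (hf₀nn t)]
  have h1d : ∀ᵐ t : ℝ ∂volume, 0 < t → f₀ t = h t := by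
    have := (ae_restrict_iff' measurableSet_Ioi).mp hhe
    filter_upwards [this] with t ht h0t
    exact ht h0t
  have hint_h : IntegrableOn h (Ioi 0) := hf₀int.congr_fun_ae hhe
  -- a.e. equality for the T-density
  have aeT : (fun t => ENNReal.ofReal (if 0 < t then t ^ (-ν) * f₀ t / E else 0))
      =ᵐ[volume] dT ν E h := by
    filter_upwards [h1d] with t ht
    unfold dT
    by_cases h0t : 0 < t
    · rw [if_pos h0t, if_pos h0t, ht h0t]
    · rw [if_neg h0t, if_neg h0t]
  -- a.e. statement on the plane
  have aeP : ∀ᵐ p : ℝ × ℝ ∂volume, 0 < p.2 → f₀ p.2 = h p.2 := by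
    rw [ae_iff]
    have hNc : volume {t : ℝ | ¬ (0 < t → f₀ t = h t)} = 0 := by
      have := h1d
      rwa [ae_iff] at this
    refine measure_mono_null (fun p hp => ?_)
      (show (volume : Measure (ℝ × ℝ)) ((univ : Set ℝ) ×ˢ {t : ℝ | ¬ (0 < t → f₀ t = h t)}) = 0
        from by rw [Measure.volume_eq_prod ℝ ℝ, Measure.prod_prod, hNc, mul_zero])
    exact ⟨trivial, hp⟩
  -- Laplace transform positivity and identification
  have hψL : ∀ s, 0 < s → Real.exp (-ψ s) = ∫ t in Ioi (0:ℝ), Real.exp (-(s * t)) * h t := by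
    intro s hs
    have hLint : IntegrableOn (fun t => Real.exp (-(s * t)) * f₀ t) (Ioi 0) := by
      refine Integrable.mono hf₀int (AEStronglyMeasurable.mul ?_ hf₀int.aestronglyMeasurable) ?_
      · exact (Real.continuous_exp.comp
          (continuous_const.mul continuous_id).neg).aestronglyMeasurable
      · refine (ae_restrict_iff' measurableSet_Ioi).2 (Filter.Eventually.of_forall fun t ht => ?_)
        have h1 : Real.exp (-(s * t)) ≤ 1 :=
          Real.exp_le_one_iff.2 (by nlinarith [mem_Ioi.1 ht])
        rw [Real.norm_eq_abs, Real.norm_eq_abs, abs_mul, abs_of_pos (Real.exp_pos _)]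
        exact mul_le_of_le_one_left (abs_nonneg _) h1
    have hLnn : 0 ≤ᵐ[volume.restrict (Ioi 0)] fun t => Real.exp (-(s * t)) * f₀ t :=
      Filter.Eventually.of_forall fun t => mul_nonneg (Real.exp_pos _).le (hf₀nn t)
    have hLpos : 0 < ∫ t in Ioi (0:ℝ), Real.exp (-(s * t)) * f₀ t := by
      rcases (integral_nonneg_of_ae hLnn).lt_or_eq with hlt | heq
      · exact hlt
      · exfalso
        have hzero := (integral_eq_zero_iff_of_nonneg_ae hLnn hLint).mp heq.symm
        have hf0 : f₀ =ᵐ[volume.restrict (Ioi 0)] 0 := by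
          filter_upwards [hzero] with t ht
          have := Real.exp_pos (-(s * t))
          simpa using (mul_eq_zero.mp ht).resolve_left (ne_of_gt this)
        rw [integral_congr_ae hf0] at hf₀dens
        simp at hf₀dens
    have : Real.exp (-ψ s) = ∫ t in Ioi (0:ℝ), Real.exp (-(s * t)) * f₀ t := by
      rw [hψ s, neg_neg, Real.exp_log hLpos]
    rw [this]
    refine integral_congr_ae ?_
    filter_upwards [hhe] with t ht
    rw [ht]
  -- probability (hence sigma-finite) instances for the factor measures
  have hgam : gammaM ν = volume.withDensity (dY ν) := rfl
  haveI : IsProbabilityMeasure (volume.withDensity (dY ν)) := by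
    rw [← hgam, ← hGamma]
    exact Measure.isProbabilityMeasure_map (hξ.mul hT).aemeasurable
  haveI : IsProbabilityMeasure (volume.withDensity (dT ν E h)) := by
    rw [← withDensity_congr_ae aeT, ← hTlaw]
    exact Measure.isProbabilityMeasure_map hT.aemeasurable
  -- the joint law of (T, ξT) is the product measure; transfer to (ξ, T)
  have hpair : Measurable fun ω => (T ω, ξ ω * T ω) := hT.prodMk (hξ.mul hT)
  have hprod : μ.map (fun ω => (T ω, ξ ω * T ω)) = (μ.map T).prod (μ.map fun ω => ξ ω * T ω) := (indepFun_iff_map_prod_eq_prod_map_map hT.aemeasurable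
    (hξ.mul hT).aemeasurable).mp hInd
  have hjoint : μ.map (fun ω => (ξ ω, T ω))
      = ((μ.map T).prod (μ.map fun ω => ξ ω * T ω)).map F := by
    rw [← hprod, Measure.map_map measurable_F hpair]
    refine Measure.map_congr ?_
    filter_upwards [hTpos] with ω hω
    show (ξ ω, T ω) = F (T ω, ξ ω * T ω)
    unfold F
    simp only []
    rw [mul_div_cancel_right₀ _ (ne_of_gt hω)]
  have hjoint2 : μ.map (fun ω => (ξ ω, T ω))
      = (volume : Measure (ℝ × ℝ)).withDensity (q ν E h) := by
    rw [hjoint, hTlaw, hGamma, hgam, withDensity_congr_ae aeT]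
    exact map_eq hν hEpos hh hhnn
  -- identify q with the stated joint density
  have aeq : q ν E h =ᵐ[(volume : Measure (ℝ × ℝ))] fun p => ENNReal.ofReal
      (if 0 < p.1 ∧ 0 < p.2 then
        (Real.exp (-(ψ p.1)) * p.1 ^ (ν - 1) / (E * Real.Gamma ν)) *
          (Real.exp (-(p.1 * p.2) + ψ p.1) * f₀ p.2)
      else 0) := by
    filter_upwards [aeP] with p hp
    unfold q
    by_cases hc : 0 < p.1 ∧ 0 < p.2
    · rw [if_pos hc, if_pos hc, ← hp hc.2]
      congr 1
      have he : Real.exp (-(ψ p.1)) * Real.exp (-(p.1 * p.2) + ψ p.1)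
          = Real.exp (-(p.1 * p.2)) := by
        rw [← Real.exp_add]; congr 1; ring
      calc p.1 ^ (ν - 1) * Real.exp (-(p.1 * p.2)) * f₀ p.2 / (E * Real.Gamma ν)
          = (Real.exp (-(ψ p.1)) * Real.exp (-(p.1 * p.2) + ψ p.1)) * p.1 ^ (ν - 1) * f₀ p.2
              / (E * Real.Gamma ν) := by rw [he]; ring
        _ = Real.exp (-(ψ p.1)) * p.1 ^ (ν - 1) / (E * Real.Gamma ν) *
              (Real.exp (-(p.1 * p.2) + ψ p.1) * f₀ p.2) := by ring
    · rw [if_neg hc, if_neg hc]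
  have conc2 : μ.map (fun ω => (ξ ω, T ω)) =
      (volume : Measure (ℝ × ℝ)).withDensity (fun p => ENNReal.ofReal
        (if 0 < p.1 ∧ 0 < p.2 then
          (Real.exp (-(ψ p.1)) * p.1 ^ (ν - 1) / (E * Real.Gamma ν)) *
            (Real.exp (-(p.1 * p.2) + ψ p.1) * f₀ p.2)
        else 0)) := by
    rw [hjoint2, withDensity_congr_ae aeq]
  refine ⟨?_, conc2⟩
  have hfst : μ.map ξ = (μ.map (fun ω => (ξ ω, T ω))).map Prod.fst := by
    rw [Measure.map_map measurable_fst (hξ.prodMk hT)]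
    rfl
  rw [hfst, hjoint2, map_fst hν hEpos hh hhnn hint_h ψ hψL]
end

section
/- Fix ν > 0, b ≥ 0, and a Lévy density λ with all relevant integrals finite. Let ξ have density s ↦ Ψ_ν(b+s) s^{ν-1}/(Γ(ν)(Ψ(b+1)-Ψ(b))), where Ψ_ν(c) = ∫₀^∞(1-e^{-t}) t^ν e^{-ct} λ(t) dt and Ψ is the Lévy exponent of λ. Conditionally on ξ = s, let (O,U) have density h(v,w) = e^{-v} e^{-(b+s)(v+w)} (v+w)^ν λ(v+w)/Ψ_ν(b+s). Then (O,U) is marginally distributed with density (v,w) ↦ e^{-v} e^{-b(v+w)} λ(v+w)/(Ψ(b+1)-Ψ(b)), independently of ξ(O+U), which has Gamma(ν,1) distribution. -/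
open MeasureTheory ProbabilityTheory Real Set
open scoped ENNReal

/-- The density of the Gamma(ν,1) distribution used in `gammaM`. -/
noncomputable def gdens (a : ℝ) : ℝ → ℝ≥0∞ := fun t => ENNReal.ofReal
  (if 0 < t then t ^ (a - 1) * Real.exp (-t) / Real.Gamma a else 0)

lemma gammaM_eq (a : ℝ) : gammaM a = volume.withDensity (gdens a) := rfl

lemma gdens_meas (a : ℝ) : Measurable (gdens a) := by
  apply Measurable.ennreal_ofReal
  exact Measurable.ite measurableSet_Ioi
    (((measurable_id'.pow_const _).mul (measurable_id'.neg.exp)).div_const _) measurable_const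

lemma gdens_lintegral {a : ℝ} (ha : 0 < a) : ∫⁻ g, gdens a g = 1 := by
  have hae : (gdens a) =ᵐ[volume] gammaPDF a 1 := by
    have h0 : ∀ᵐ g : ℝ, g ≠ (0 : ℝ) := by
      rw [ae_iff]
      simp only [ne_eq, not_not, setOf_eq_eq_singleton]
      exact Real.volume_singleton
    filter_upwards [h0] with g hg
    rcases lt_or_gt_of_ne hg with h | h
    · rw [gammaPDF_of_neg h]
      simp [gdens, if_neg (not_lt.2 h.le)]
    · rw [gammaPDF_of_nonneg h.le]
      simp only [gdens, if_pos h]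
      congr 1
      rw [Real.one_rpow]
      ring_nf
  rw [lintegral_congr_ae hae]
  exact lintegral_gammaPDF_eq_one ha one_pos

/-- The marginal density of the overshoot/undershoot pair. -/
noncomputable def fdens (b D : ℝ) (l : ℝ → ℝ) : ℝ × ℝ → ℝ≥0∞ := fun q => ENNReal.ofReal
  (if 0 < q.1 ∧ 0 < q.2 then
    Real.exp (-q.1) * Real.exp (-(b * (q.1 + q.2))) * l (q.1 + q.2) / D else 0)

lemma fdens_meas (b D : ℝ) {l : ℝ → ℝ} (hl : Measurable l) : Measurable (fdens b D l) := by
  apply Measurable.ennreal_ofReal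
  refine Measurable.ite ?_ ?_ measurable_const
  · exact (measurableSet_lt measurable_const measurable_fst).inter
      (measurableSet_lt measurable_const measurable_snd)
  · exact (((measurable_fst.neg.exp).mul
      (((measurable_fst.add measurable_snd).const_mul b).neg.exp)).mul
      (hl.comp (measurable_fst.add measurable_snd))).div_const _

theorem overshoot_undershoot_independence
    {Ω : Type*} [MeasureSpace Ω] (μ : Measure Ω) [IsProbabilityMeasure μ]
    (ν b : ℝ) (hν : 0 < ν) (hb : 0 ≤ b)
    (l : ℝ → ℝ) (hlmeas : Measurable l) (hlpos : ∀ t, 0 < t → 0 < l t)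
    (hlint : IntegrableOn (fun t => min 1 t * l t) (Ioi 0))
    -- the Lévy exponent Ψ of λ and the exponent Ψ_ν of the tilted density:
    (Ψ : ℝ → ℝ) (hΨ : ∀ s, Ψ s = ∫ t in Ioi (0:ℝ), (1 - Real.exp (-(s * t))) * l t)
    (Ψν : ℝ → ℝ)
    (hΨν : ∀ c, Ψν c = ∫ t in Ioi (0:ℝ), (1 - Real.exp (-t)) * t ^ ν * Real.exp (-(c * t)) * l t)
    (hfin : 0 < Ψ (b + 1) - Ψ b) (hΨνfin : ∀ c, 0 ≤ c → 0 < Ψν c)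
    (hΨνint : IntegrableOn (fun s => Ψν (b + s) * s ^ (ν - 1)) (Ioi 0))
    (ξ O U : Ω → ℝ) (hξ : Measurable ξ) (hO : Measurable O) (hU : Measurable U)
    -- joint density of (ξ, O, U): the marginal density of ξ times the conditional density h of
    -- (O,U) given ξ = s:
    (hjoint : μ.map (fun ω => (ξ ω, O ω, U ω)) =
      (volume : Measure (ℝ × ℝ × ℝ)).withDensity (fun p => ENNReal.ofReal
        (if 0 < p.1 ∧ 0 < p.2.1 ∧ 0 < p.2.2 then
          (Ψν (b + p.1) * p.1 ^ (ν - 1) / (Real.Gamma ν * (Ψ (b + 1) - Ψ b))) *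
            (Real.exp (-p.2.1) * Real.exp (-((b + p.1) * (p.2.1 + p.2.2))) *
              (p.2.1 + p.2.2) ^ ν * l (p.2.1 + p.2.2) / Ψν (b + p.1))
        else 0))) :
    μ.map (fun ω => (O ω, U ω)) =
      (volume : Measure (ℝ × ℝ)).withDensity (fun q => ENNReal.ofReal
        (if 0 < q.1 ∧ 0 < q.2 then
          Real.exp (-q.1) * Real.exp (-(b * (q.1 + q.2))) * l (q.1 + q.2) / (Ψ (b + 1) - Ψ b)
        else 0)) ∧
    IndepFun (fun ω => (O ω, U ω)) (fun ω => ξ ω * (O ω + U ω)) μ ∧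
    μ.map (fun ω => ξ ω * (O ω + U ω)) = gammaM ν := by
  have hΓ : 0 < Real.Gamma ν := Real.Gamma_pos_of_pos hν
  set D : ℝ := Ψ (b + 1) - Ψ b with hD
  set γd : ℝ → ℝ≥0∞ := gdens ν with hγd
  set f₂d : ℝ × ℝ → ℝ≥0∞ := fdens b D l with hf₂d
  have hmγ : Measurable γd := gdens_meas ν
  have hmf₂ : Measurable f₂d := fdens_meas b D hlmeas
  set F : ℝ × ℝ × ℝ → ℝ≥0∞ := fun p => ENNReal.ofReal
        (if 0 < p.1 ∧ 0 < p.2.1 ∧ 0 < p.2.2 then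
          (Ψν (b + p.1) * p.1 ^ (ν - 1) / (Real.Gamma ν * (Ψ (b + 1) - Ψ b))) *
            (Real.exp (-p.2.1) * Real.exp (-((b + p.1) * (p.2.1 + p.2.2))) *
              (p.2.1 + p.2.2) ^ ν * l (p.2.1 + p.2.2) / Ψν (b + p.1))
        else 0) with hF
  set F' : ℝ × ℝ × ℝ → ℝ≥0∞ := fun p =>
    ENNReal.ofReal (p.2.1 + p.2.2) * f₂d p.2 * γd (p.1 * (p.2.1 + p.2.2)) with hF'
  have hmF' : Measurable F' :=
    (((measurable_snd.fst.add measurable_snd.snd).ennreal_ofReal).mul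
      (hmf₂.comp measurable_snd)).mul
      (hmγ.comp (measurable_fst.mul (measurable_snd.fst.add measurable_snd.snd)))
  -- pointwise identity between the joint density and the product form
  have hpt : ∀ p : ℝ × ℝ × ℝ, F p = F' p := by
    rintro ⟨s, v, w⟩
    by_cases hvw : 0 < v ∧ 0 < w
    · have ht : 0 < v + w := add_pos hvw.1 hvw.2
      by_cases hs : 0 < s
      · have hP : 0 < Ψν (b + s) := hΨνfin (b + s) (add_nonneg hb hs.le)
        have hst : 0 < s * (v + w) := mul_pos hs ht
        have hc : 0 < s ∧ 0 < v ∧ 0 < w := ⟨hs, hvw.1, hvw.2⟩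
        have hlnn : 0 ≤ l (v + w) := (hlpos _ ht).le
        have hf2nn : 0 ≤ Real.exp (-v) * Real.exp (-(b * (v + w))) * l (v + w) / D :=
          div_nonneg (mul_nonneg (mul_nonneg (Real.exp_pos _).le (Real.exp_pos _).le) hlnn)
            hfin.le
        simp only [hF, hF', hγd, hf₂d, gdens, fdens, if_pos hc, if_pos hvw, if_pos hst]
        rw [← ENNReal.ofReal_mul ht.le, ← ENNReal.ofReal_mul (mul_nonneg ht.le hf2nn)]
        congr 1
        have h1 : Real.exp (-((b + s) * (v + w)))
            = Real.exp (-(b * (v + w))) * Real.exp (-(s * (v + w))) := by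
          rw [← Real.exp_add]; congr 1; ring
        have h2 : (s * (v + w)) ^ (ν - 1) = s ^ (ν - 1) * (v + w) ^ (ν - 1) :=
          Real.mul_rpow hs.le ht.le
        have h3 : (v + w) ^ ν = (v + w) ^ (ν - 1) * (v + w) := by
          rw [← Real.rpow_add_one ht.ne' (ν - 1)]
          congr 1; ring
        rw [h1, h2, h3, ← hD]
        field_simp
      · have h1 : ¬ (0 < s ∧ 0 < v ∧ 0 < w) := fun h => hs h.1
        have h2 : ¬ (0 < s * (v + w)) :=
          not_lt.2 (mul_nonpos_of_nonpos_of_nonneg (not_lt.1 hs) ht.le)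
        simp [hF, hF', hγd, gdens, if_neg h1, if_neg h2]
    · have h1 : ¬ (0 < s ∧ 0 < v ∧ 0 < w) := fun h => hvw ⟨h.2.1, h.2.2⟩
      simp [hF, hF', hf₂d, fdens, if_neg h1, if_neg hvw]
  have hFF' : F = F' := funext hpt
  -- the pushforward map
  set Φ : ℝ × ℝ × ℝ → (ℝ × ℝ) × ℝ := fun p => (p.2, p.1 * (p.2.1 + p.2.2)) with hΦdef
  have hΦ : Measurable Φ :=
    measurable_snd.prodMk (measurable_fst.mul (measurable_snd.fst.add measurable_snd.snd))
  have hpair_meas : Measurable (fun ω => ((O ω, U ω), ξ ω * (O ω + U ω))) :=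
    ((hO.prodMk hU).prodMk (hξ.mul (hO.add hU)))
  have hmap : μ.map (fun ω => ((O ω, U ω), ξ ω * (O ω + U ω)))
      = ((volume : Measure (ℝ × ℝ × ℝ)).withDensity F).map Φ := by
    rw [← hjoint, Measure.map_map hΦ (hξ.prodMk (hO.prodMk hU))]
    rfl
  -- the key change-of-variables computation
  have hkey : ((volume : Measure (ℝ × ℝ × ℝ)).withDensity F).map Φ
      = (volume : Measure ((ℝ × ℝ) × ℝ)).withDensity (fun p => f₂d p.1 * γd p.2) := by
    rw [hFF']
    ext A hA
    rw [Measure.map_apply hΦ hA, withDensity_apply _ (hΦ hA), withDensity_apply _ hA,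
        ← lintegral_indicator (hΦ hA), ← lintegral_indicator hA]
    have hindmeas : Measurable (A.indicator (1 : ((ℝ × ℝ) × ℝ) → ℝ≥0∞)) :=
      measurable_one.indicator hA
    have hindL : (Φ ⁻¹' A).indicator F' = fun p => F' p * A.indicator 1 (Φ p) := by
      funext p
      by_cases h : Φ p ∈ A <;> simp [Set.indicator_apply, h]
    have hindR : A.indicator (fun p : (ℝ × ℝ) × ℝ => f₂d p.1 * γd p.2)
        = fun p => f₂d p.1 * γd p.2 * A.indicator 1 p := by
      funext p
      by_cases h : p ∈ A <;> simp [Set.indicator_apply, h]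
    rw [hindL, hindR]
    have hmint : Measurable fun p : ℝ × ℝ × ℝ => F' p * A.indicator 1 (Φ p) :=
      hmF'.mul (hindmeas.comp hΦ)
    calc ∫⁻ p : ℝ × ℝ × ℝ, F' p * A.indicator 1 (Φ p)
        = ∫⁻ s : ℝ, ∫⁻ q : ℝ × ℝ, F' (s, q) * A.indicator 1 (Φ (s, q)) := by
          rw [Measure.volume_eq_prod, lintegral_prod _ hmint.aemeasurable]
      _ = ∫⁻ q : ℝ × ℝ, ∫⁻ s : ℝ, F' (s, q) * A.indicator 1 (Φ (s, q)) := by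
          exact lintegral_lintegral_swap hmint.aemeasurable
      _ = ∫⁻ q : ℝ × ℝ, f₂d q * ∫⁻ g : ℝ, γd g * A.indicator 1 (q, g) := by
          refine lintegral_congr fun q => ?_
          have hh : Measurable fun g => γd g * A.indicator 1 (q, g) :=
            hmγ.mul (hindmeas.comp (measurable_const.prodMk measurable_id))
          by_cases hq : 0 < q.1 ∧ 0 < q.2
          · set t : ℝ := q.1 + q.2 with htdef
            have ht : 0 < t := add_pos hq.1 hq.2
            set h : ℝ → ℝ≥0∞ := fun g => γd g * A.indicator 1 (q, g) with hhdef
            have hhm : Measurable h := hh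
            have hstep : ∀ s : ℝ, F' (s, q) * A.indicator 1 (Φ (s, q))
                = (ENNReal.ofReal t * f₂d q) * h (s * t) := by
              intro s
              show ENNReal.ofReal t * f₂d q * γd (s * t) * A.indicator 1 (q, s * t)
                = ENNReal.ofReal t * f₂d q * h (s * t)
              simp only [hhdef]
              ring
            simp only [hstep]
            rw [lintegral_const_mul (f := fun s : ℝ => h (s * t)) _ (hhm.comp (measurable_mul_const t))]
            have h1 := lintegral_map (μ := (volume : Measure ℝ)) hhm (measurable_mul_const t)
            rw [Real.map_volume_mul_right ht.ne', lintegral_smul_measure,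
              abs_of_pos (inv_pos.2 ht)] at h1
            beta_reduce at h1
            have hone : ENNReal.ofReal t * ENNReal.ofReal t⁻¹ = 1 := by
              rw [← ENNReal.ofReal_mul ht.le, mul_inv_cancel₀ ht.ne', ENNReal.ofReal_one]
            calc (ENNReal.ofReal t * f₂d q) * ∫⁻ s : ℝ, h (s * t)
                = (ENNReal.ofReal t * f₂d q) * (ENNReal.ofReal t⁻¹ * ∫⁻ g : ℝ, h g) := by
                  rw [← h1, smul_eq_mul]
              _ = (ENNReal.ofReal t * ENNReal.ofReal t⁻¹) * (f₂d q * ∫⁻ g : ℝ, h g) := by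
                  ring
              _ = f₂d q * ∫⁻ g : ℝ, h g := by rw [hone, one_mul]
          · have h0 : f₂d q = 0 := by
              simp [hf₂d, fdens, if_neg hq]
            have hz : ∀ s : ℝ, F' (s, q) * A.indicator 1 (Φ (s, q)) = 0 := by
              intro s
              simp [hF', h0]
            simp only [hz, h0, lintegral_zero, zero_mul]
      _ = ∫⁻ p : (ℝ × ℝ) × ℝ, f₂d p.1 * γd p.2 * A.indicator 1 p := by
          conv_rhs => rw [Measure.volume_eq_prod]
          rw [lintegral_prod (fun p : (ℝ × ℝ) × ℝ => f₂d p.1 * γd p.2 * A.indicator 1 p)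
            (((hmf₂.comp measurable_fst).mul
              (hmγ.comp measurable_snd)).mul hindmeas).aemeasurable]
          refine lintegral_congr fun q => ?_
          rw [← lintegral_const_mul (f := fun g : ℝ => γd g * A.indicator 1 (q, g)) _
            (hmγ.mul (hindmeas.comp (measurable_const.prodMk measurable_id)))]
          refine lintegral_congr fun g => ?_
          ring
  have hjm : μ.map (fun ω => ((O ω, U ω), ξ ω * (O ω + U ω)))
      = (volume : Measure ((ℝ × ℝ) × ℝ)).withDensity (fun p => f₂d p.1 * γd p.2) :=
    hmap.trans hkey
  -- total masses
  have hγ1 : ∫⁻ g, γd g = 1 := gdens_lintegral hν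
  have hprob : IsProbabilityMeasure (μ.map (fun ω => ((O ω, U ω), ξ ω * (O ω + U ω)))) :=
    Measure.isProbabilityMeasure_map hpair_meas.aemeasurable
  have hf1 : ∫⁻ q, f₂d q = 1 := by
    have h1 : (volume : Measure ((ℝ × ℝ) × ℝ)).withDensity
        (fun p => f₂d p.1 * γd p.2) Set.univ = 1 := by
      rw [← hjm]; exact hprob.measure_univ
    rw [withDensity_apply _ MeasurableSet.univ, setLIntegral_univ, Measure.volume_eq_prod,
      lintegral_prod_mul hmf₂.aemeasurable hmγ.aemeasurable, hγ1, mul_one] at h1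
    exact h1
  have hπ₁prob : IsProbabilityMeasure ((volume : Measure (ℝ × ℝ)).withDensity f₂d) := by
    constructor
    rw [withDensity_apply _ MeasurableSet.univ, setLIntegral_univ]
    exact hf1
  have hπ₂prob : IsProbabilityMeasure ((volume : Measure ℝ).withDensity γd) := by
    constructor
    rw [withDensity_apply _ MeasurableSet.univ, setLIntegral_univ]
    exact hγ1
  -- the joint law is the product of the candidate marginals
  have hprod : (volume : Measure ((ℝ × ℝ) × ℝ)).withDensity (fun p => f₂d p.1 * γd p.2)
      = ((volume : Measure (ℝ × ℝ)).withDensity f₂d).prod ((volume : Measure ℝ).withDensity γd) := by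
    haveI := hπ₁prob
    haveI := hπ₂prob
    refine (Measure.prod_eq (μ := (volume : Measure (ℝ × ℝ)).withDensity f₂d)
      (ν := (volume : Measure ℝ).withDensity γd) fun s t hs ht => ?_).symm
    rw [withDensity_apply _ (hs.prod ht), withDensity_apply _ hs, withDensity_apply _ ht,
      Measure.volume_eq_prod, ← Measure.prod_restrict,
      lintegral_prod_mul hmf₂.aemeasurable hmγ.aemeasurable]
  have hjm2 : μ.map (fun ω => ((O ω, U ω), ξ ω * (O ω + U ω)))
      = ((volume : Measure (ℝ × ℝ)).withDensity f₂d).prod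
        ((volume : Measure ℝ).withDensity γd) := hjm.trans hprod
  -- marginals
  have hOU : μ.map (fun ω => (O ω, U ω)) = (volume : Measure (ℝ × ℝ)).withDensity f₂d := by
    have h1 : μ.map (fun ω => (O ω, U ω))
        = (μ.map (fun ω => ((O ω, U ω), ξ ω * (O ω + U ω)))).map Prod.fst := by
      rw [Measure.map_map measurable_fst hpair_meas]
      rfl
    rw [h1, hjm2, Measure.map_fst_prod, hπ₂prob.measure_univ, one_smul]
  have hG : μ.map (fun ω => ξ ω * (O ω + U ω)) = (volume : Measure ℝ).withDensity γd := by
    have h1 : μ.map (fun ω => ξ ω * (O ω + U ω))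
        = (μ.map (fun ω => ((O ω, U ω), ξ ω * (O ω + U ω)))).map Prod.snd := by
      rw [Measure.map_map measurable_snd hpair_meas]
      rfl
    rw [h1, hjm2, Measure.map_snd_prod, hπ₁prob.measure_univ, one_smul]
  refine ⟨hOU, ?_, hG⟩
  rw [indepFun_iff_map_prod_eq_prod_map_map (hO.prodMk hU).aemeasurable
    (show Measurable (fun ω => ξ ω * (O ω + U ω)) from hξ.mul (hO.add hU)).aemeasurable, hOU, hG]
  exact hjm2
end

section
/- For α ∈ (0,1), ν > 0, b > 0 with δ := α - ν ∈ (0,α), the Lévy density λ(s) = (α/Γ(1-α)) s^{ν-α-1} e^{-bs} has Lévy exponent Ψ_ν(b) := ∫₀^∞ (1-e^{-s}) λ(s) ds = (α Γ(1-δ))/(δ Γ(1-α)) ((b+1)^δ - b^δ). -/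
open MeasureTheory Real Set Filter Topology

private lemma aux_integrable {d r : ℝ} (hd : d < 1) (hr : 0 < r) :
    MeasureTheory.IntegrableOn (fun t : ℝ => t ^ (-d) * Real.exp (-(r * t))) (Set.Ioi 0) := by
  have h0 : IntegrableOn (fun x : ℝ => Real.exp (-x) * x ^ ((1 - d) - 1)) (Ioi (r * 0)) := by
    rw [mul_zero]
    exact Real.GammaIntegral_convergent (by linarith)
  have h1 : IntegrableOn (fun x : ℝ => Real.exp (-(r * x)) * (r * x) ^ ((1 - d) - 1)) (Ioi 0) :=
    (MeasureTheory.integrableOn_Ioi_comp_mul_left_iff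
      (fun x : ℝ => Real.exp (-x) * x ^ ((1 - d) - 1)) 0 hr).2 h0
  have h2 : IntegrableOn (fun x : ℝ => r ^ d * (Real.exp (-(r * x)) * (r * x) ^ ((1 - d) - 1)))
      (Ioi 0) := h1.const_mul (r ^ d)
  refine h2.congr_fun (fun x hx => ?_) measurableSet_Ioi
  have hx0 : (0 : ℝ) < x := hx
  have hrr : r ^ d * r ^ (-d) = 1 := by
    rw [← Real.rpow_add hr]; simp
  beta_reduce
  rw [show (1 - d) - 1 = -d by ring, Real.mul_rpow hr.le hx0.le]
  linear_combination (Real.exp (-(r * x)) * x ^ (-d)) * hrr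

private lemma aux_integral {d r : ℝ} (hd : d < 1) (hr : 0 < r) :
    ∫ t in Set.Ioi (0 : ℝ), t ^ (-d) * Real.exp (-(r * t))
      = r ^ (d - 1) * Real.Gamma (1 - d) := by
  have h := Real.integral_rpow_mul_exp_neg_mul_Ioi (a := 1 - d) (by linarith) hr
  rw [show (1 - d) - 1 = -d by ring] at h
  rw [h, one_div, Real.inv_rpow hr.le, ← Real.rpow_neg hr.le, show -(1 - d) = d - 1 by ring]

private lemma key_levy {δ b : ℝ} (hδ0 : 0 < δ) (hδ1 : δ < 1) (hb : 0 < b) :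
    ∫ s in Set.Ioi (0 : ℝ), (1 - Real.exp (-s)) * Real.exp (-(b * s)) * s ^ (-δ - 1)
      = Real.Gamma (1 - δ) / δ * ((b + 1) ^ δ - b ^ δ) := by
  have hb1 : (0 : ℝ) < b + 1 := by linarith
  set f : ℝ → ℝ := fun s => (1 - Real.exp (-s)) * Real.exp (-(b * s)) * s ^ (-δ - 1) with hfdef
  set g : ℝ → ℝ := fun s =>
    ((b + 1) * (s ^ (-δ) * Real.exp (-((b + 1) * s))) - b * (s ^ (-δ) * Real.exp (-(b * s)))) / δ
    with hgdef
  set F : ℝ → ℝ := fun s => -((1 - Real.exp (-s)) * Real.exp (-(b * s)) * s ^ (-δ)) / δ with hFdef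
  have hintg : IntegrableOn g (Ioi 0) :=
    ((((aux_integrable hδ1 hb1).const_mul (b + 1)).sub
      ((aux_integrable hδ1 hb).const_mul b)).div_const δ)
  have hmeas : AEStronglyMeasurable f (volume.restrict (Ioi 0)) := by
    refine ContinuousOn.aestronglyMeasurable ?_ measurableSet_Ioi
    refine ContinuousOn.mul (Continuous.continuousOn (by fun_prop)) ?_
    intro x hx
    exact (Real.continuousAt_rpow_const x (-δ - 1)
      (Or.inl (ne_of_gt hx))).continuousWithinAt
  have hintf : IntegrableOn f (Ioi 0) := by
    refine Integrable.mono (aux_integrable hδ1 hb) hmeas ?_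
    rw [ae_restrict_iff' measurableSet_Ioi]
    filter_upwards with x hx
    have hx0 : (0 : ℝ) < x := hx
    have h1 : 0 ≤ 1 - Real.exp (-x) := by
      have : Real.exp (-x) ≤ Real.exp 0 := Real.exp_le_exp.2 (by linarith)
      simpa using this
    have h2 : 1 - Real.exp (-x) ≤ x := by linarith [Real.add_one_le_exp (-x)]
    have hE : 0 < Real.exp (-(b * x)) := Real.exp_pos _
    have hPn : 0 ≤ x ^ (-δ - 1) := Real.rpow_nonneg hx0.le _
    have hP : x ^ (-δ) = x ^ (-δ - 1) * x := by
      have h := Real.rpow_add_one hx0.ne' (-δ - 1)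
      rwa [show -δ - 1 + 1 = -δ by ring] at h
    rw [Real.norm_eq_abs, Real.norm_eq_abs,
      abs_of_nonneg (mul_nonneg (Real.rpow_nonneg hx0.le _) hE.le)]
    simp only [hfdef]
    rw [abs_of_nonneg (mul_nonneg (mul_nonneg h1 hE.le) hPn), hP]
    nlinarith [mul_nonneg (mul_nonneg (sub_nonneg.2 h2) hE.le) hPn]
  have hderiv : ∀ x ∈ Ioi (0 : ℝ), HasDerivAt F (f x - g x) x := by
    intro x hx
    have hx0 : (0 : ℝ) < x := hx
    have h1 : HasDerivAt (fun s : ℝ => 1 - Real.exp (-s)) (Real.exp (-x)) x := by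
      have h := (Real.hasDerivAt_exp (-x)).comp x (hasDerivAt_neg x)
      simpa using h.const_sub 1
    have h2 : HasDerivAt (fun s : ℝ => Real.exp (-(b * s))) (-b * Real.exp (-(b * x))) x := by
      have hlin : HasDerivAt (fun s : ℝ => -(b * s)) (-b) x := by
        exact (((hasDerivAt_id x).const_mul b).neg).congr_deriv (by simp)
      simpa [mul_comm, Function.comp_def] using (Real.hasDerivAt_exp (-(b * x))).comp x hlin
    have h3 : HasDerivAt (fun s : ℝ => s ^ (-δ)) (-δ * x ^ (-δ - 1)) x :=
      Real.hasDerivAt_rpow_const (Or.inl hx0.ne')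
    have h4 := (((h1.mul h2).mul h3).neg).div_const δ
    refine h4.congr_deriv (Eq.symm ?_)
    have hE : Real.exp (-((b + 1) * x)) = Real.exp (-x) * Real.exp (-(b * x)) := by
      rw [← Real.exp_add]; congr 1; ring
    have hP : x ^ (-δ) = x ^ (-δ - 1) * x := by
      have h := Real.rpow_add_one hx0.ne' (-δ - 1)
      rwa [show -δ - 1 + 1 = -δ by ring] at h
    simp only [hfdef, hgdef, Pi.mul_apply]
    rw [hE, hP]
    field_simp
    ring
  have hcw : ContinuousWithinAt F (Ici 0) 0 := by
    have hF0 : F 0 = 0 := by simp [hFdef]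
    rw [ContinuousWithinAt, hF0]
    apply squeeze_zero_norm' (a := fun s : ℝ => s ^ (1 - δ) / δ)
    · filter_upwards [self_mem_nhdsWithin] with s hs
      have hs0 : (0 : ℝ) ≤ s := hs
      have h1 : 0 ≤ 1 - Real.exp (-s) := by
        have : Real.exp (-s) ≤ Real.exp 0 := Real.exp_le_exp.2 (by linarith)
        simpa using this
      have h2 : 1 - Real.exp (-s) ≤ s := by linarith [Real.add_one_le_exp (-s)]
      have hE1 : Real.exp (-(b * s)) ≤ 1 := by
        have : Real.exp (-(b * s)) ≤ Real.exp 0 := Real.exp_le_exp.2 (by nlinarith)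
        simpa using this
      have hE : 0 < Real.exp (-(b * s)) := Real.exp_pos _
      have hPn : 0 ≤ s ^ (-δ) := Real.rpow_nonneg hs0 _
      have hP : s ^ (1 - δ) = s * s ^ (-δ) := by
        rw [show (1 : ℝ) - δ = 1 + -δ by ring, Real.rpow_add' hs0 (by intro h; linarith),
          Real.rpow_one]
      simp only [hFdef]
      rw [Real.norm_eq_abs, abs_div, abs_of_pos hδ0, abs_neg,
        abs_of_nonneg (mul_nonneg (mul_nonneg h1 hE.le) hPn), hP]
      gcongr
      nlinarith [mul_nonneg (sub_nonneg.2 h2) hPn, mul_nonneg (mul_nonneg h1 hPn) (sub_nonneg.2 hE1)]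
    · have hc : ContinuousWithinAt (fun s : ℝ => s ^ (1 - δ) / δ) (Ici 0) 0 :=
        ((Real.continuousAt_rpow_const 0 (1 - δ) (Or.inr (by linarith))).div_const
          δ).continuousWithinAt
      have h0 : (0 : ℝ) ^ (1 - δ) / δ = 0 := by
        rw [Real.zero_rpow (by intro h; linarith)]; simp
      simpa [ContinuousWithinAt, h0] using hc
  have htop : Tendsto F atTop (𝓝 0) := by
    apply squeeze_zero_norm' (a := fun s : ℝ => Real.exp (-(b * s)) / δ)
    · filter_upwards [eventually_ge_atTop (1 : ℝ)] with s hs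
      have hs0 : (0 : ℝ) ≤ s := by linarith
      have h1 : 0 ≤ 1 - Real.exp (-s) := by
        have : Real.exp (-s) ≤ Real.exp 0 := Real.exp_le_exp.2 (by linarith)
        simpa using this
      have h1' : 1 - Real.exp (-s) ≤ 1 := by linarith [Real.exp_pos (-s)]
      have hE : 0 < Real.exp (-(b * s)) := Real.exp_pos _
      have hPn : 0 ≤ s ^ (-δ) := Real.rpow_nonneg hs0 _
      have hP1 : s ^ (-δ) ≤ 1 := Real.rpow_le_one_of_one_le_of_nonpos hs (by linarith)
      simp only [hFdef]
      rw [Real.norm_eq_abs, abs_div, abs_of_pos hδ0, abs_neg,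
        abs_of_nonneg (mul_nonneg (mul_nonneg h1 hE.le) hPn)]
      gcongr
      nlinarith [mul_nonneg (mul_nonneg h1 hE.le) (sub_nonneg.2 hP1),
        mul_nonneg (mul_nonneg (sub_nonneg.2 h1') hE.le) hPn]
    · have hbs : Tendsto (fun s : ℝ => b * s) atTop atTop :=
        Tendsto.const_mul_atTop hb tendsto_id
      have := (Real.tendsto_exp_neg_atTop_nhds_zero.comp hbs).div_const δ
      simpa using this
  have hFTC := integral_Ioi_of_hasDerivAt_of_tendsto hcw hderiv (hintf.sub hintg) htop
  have hF0 : F 0 = 0 := by simp [hFdef]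
  rw [hF0, sub_zero, integral_sub hintf hintg, sub_eq_zero] at hFTC
  have hgval : ∫ s in Ioi (0 : ℝ), g s
      = ((b + 1) * ((b + 1) ^ (δ - 1) * Real.Gamma (1 - δ))
          - b * (b ^ (δ - 1) * Real.Gamma (1 - δ))) / δ := by
    simp only [hgdef]
    rw [MeasureTheory.integral_div _, integral_sub ((aux_integrable hδ1 hb1).const_mul _)
      ((aux_integrable hδ1 hb).const_mul _), MeasureTheory.integral_const_mul, MeasureTheory.integral_const_mul,
      aux_integral hδ1 hb1, aux_integral hδ1 hb]
  have hbp : (b + 1) * (b + 1) ^ (δ - 1) = (b + 1) ^ δ := by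
    have h := Real.rpow_add_one hb1.ne' (δ - 1)
    rw [show δ - 1 + 1 = δ by ring] at h
    rw [h]; ring
  have hbp' : b * b ^ (δ - 1) = b ^ δ := by
    have h := Real.rpow_add_one hb.ne' (δ - 1)
    rw [show δ - 1 + 1 = δ by ring] at h
    rw [h]; ring
  rw [hFTC, hgval]
  field_simp
  linear_combination Real.Gamma (1 - δ) * hbp - Real.Gamma (1 - δ) * hbp'

theorem levy_exponent_generalized_gamma
    (α ν b : ℝ) (hα : α ∈ Ioo (0:ℝ) 1) (hν : 0 < ν) (hb : 0 < b)
    (hδ : α - ν ∈ Ioo (0:ℝ) α) :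
    ∫ s in Ioi (0:ℝ),
        (1 - Real.exp (-s)) * (α / Real.Gamma (1 - α) * s ^ (ν - α - 1) * Real.exp (-(b * s)))
      = α * Real.Gamma (1 - (α - ν)) / ((α - ν) * Real.Gamma (1 - α)) *
          ((b + 1) ^ (α - ν) - b ^ (α - ν)) := by
  obtain ⟨hα0, hα1⟩ := hα
  obtain ⟨hδ0, hδα⟩ := hδ
  have hδ1 : α - ν < 1 := lt_trans hδα hα1
  have hΓ : Real.Gamma (1 - α) ≠ 0 := (Real.Gamma_pos_of_pos (by linarith)).ne'
  have h1 : ∫ s in Ioi (0:ℝ),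
        (1 - Real.exp (-s)) * (α / Real.Gamma (1 - α) * s ^ (ν - α - 1) * Real.exp (-(b * s)))
      = ∫ s in Ioi (0:ℝ), (α / Real.Gamma (1 - α)) *
          ((1 - Real.exp (-s)) * Real.exp (-(b * s)) * s ^ (-(α - ν) - 1)) := by
    refine setIntegral_congr_fun measurableSet_Ioi fun s hs => ?_
    rw [show ν - α - 1 = -(α - ν) - 1 by ring]
    ring
  rw [h1, MeasureTheory.integral_const_mul, key_levy hδ0 hδ1 hb]
  field_simp
end
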